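/- In a tangent category with negatives, let K be a vertical connection on a differential bundle 𝗊, and suppose 𝗊 has some horizontal connection J. Then J(1_{T(E)} − ⟨K, p⟩μ) is a horizontal connection on 𝗊, and the pair (K, J(1_{T(E)} − ⟨K, p⟩μ)) is a connection on 𝗊. -/

import Mathlib

open CategoryTheory CategoryTheory.Limits

open scoped Classical

universe v u

variable {C : Type u} [Category.{v} C]

/-- Chosen pullback: explicit pullback data for a cospan `f : A ⟶ Z ⟵ B : g`. -/
structure ChosenPB {A B Z : C} (f : A ⟶ Z) (g : B ⟶ Z) where
  P : C
  pr0 : P ⟶ A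
  pr1 : P ⟶ B
  comm : pr0 ≫ f = pr1 ≫ g
  pair : ∀ {X : C} (u : X ⟶ A) (v : X ⟶ B), u ≫ f = v ≫ g → (X ⟶ P)
  pair_pr0 : ∀ {X : C} (u : X ⟶ A) (v : X ⟶ B) (h : u ≫ f = v ≫ g),
    pair u v h ≫ pr0 = u
  pair_pr1 : ∀ {X : C} (u : X ⟶ A) (v : X ⟶ B) (h : u ≫ f = v ≫ g),
    pair u v h ≫ pr1 = v
  hom_ext : ∀ {X : C} (w w' : X ⟶ P),
    w ≫ pr0 = w' ≫ pr0 → w ≫ pr1 = w' ≫ pr1 → w = w'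

/-- Witness that the endofunctor `T` preserves the chosen pullback `PB`. -/
structure PBLift (T : C ⥤ C) {A B Z : C} {f : A ⟶ Z} {g : B ⟶ Z} (PB : ChosenPB f g) where
  pair : ∀ {X : C} (u : X ⟶ T.obj A) (v : X ⟶ T.obj B),
    u ≫ T.map f = v ≫ T.map g → (X ⟶ T.obj PB.P)
  pair_pr0 : ∀ {X : C} (u : X ⟶ T.obj A) (v : X ⟶ T.obj B)
    (h : u ≫ T.map f = v ≫ T.map g), pair u v h ≫ T.map PB.pr0 = u
  pair_pr1 : ∀ {X : C} (u : X ⟶ T.obj A) (v : X ⟶ T.obj B)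
    (h : u ≫ T.map f = v ≫ T.map g), pair u v h ≫ T.map PB.pr1 = v
  hom_ext : ∀ {X : C} (w w' : X ⟶ T.obj PB.P),
    w ≫ T.map PB.pr0 = w' ≫ T.map PB.pr0 → w ≫ T.map PB.pr1 = w' ≫ T.map PB.pr1 → w = w'

/-- The image of a preserved chosen pullback is again a chosen pullback. -/
def PBLift.toChosenPB {T : C ⥤ C} {A B Z : C} {f : A ⟶ Z} {g : B ⟶ Z} {PB : ChosenPB f g}
    (L : PBLift T PB) : ChosenPB (T.map f) (T.map g) where
  P := T.obj PB.P
  pr0 := T.map PB.pr0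
  pr1 := T.map PB.pr1
  comm := by rw [← T.map_comp, ← T.map_comp, PB.comm]
  pair := L.pair
  pair_pr0 := L.pair_pr0
  pair_pr1 := L.pair_pr1
  hom_ext := L.hom_ext

/-- Iterated endofunctor `Tⁿ`. -/
def fpow (T : C ⥤ C) : ℕ → C ⥤ C
  | 0 => 𝟭 C
  | n + 1 => fpow T n ⋙ T

/-- A tangent category in the sense of Cockett–Cruttwell, presented with chosen
pullbacks `T₂M` of `p_M` along itself (preserved by each `Tⁿ`), addition `+`,
projection `p`, zero `0`, vertical lift `ℓ` and canonical flip `c`, together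
with the universality of the vertical lift. Sums, associativity etc. are
expressed in generalized-element form via the chosen pullback pairings. -/
structure TangentCat (C : Type u) [Category.{v} C] where
  T : C ⥤ C
  p : T ⟶ 𝟭 C
  zero : 𝟭 C ⟶ T
  l : T ⟶ T ⋙ T
  c : T ⋙ T ⟶ T ⋙ T
  T2 : ∀ M : C, ChosenPB (p.app M) (p.app M)
  T2T : ∀ M : C, PBLift T (T2 M)
  T2Tn : ∀ (M : C) (n : ℕ), PBLift (fpow T n) (T2 M)
  add : ∀ M : C, (T2 M).P ⟶ T.obj M
  add_nat : ∀ {M N : C} (f : M ⟶ N) {X : C} (u v : X ⟶ T.obj M)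
    (h : u ≫ p.app M = v ≫ p.app M)
    (h' : (u ≫ T.map f) ≫ p.app N = (v ≫ T.map f) ≫ p.app N),
    (T2 M).pair u v h ≫ add M ≫ T.map f
      = (T2 N).pair (u ≫ T.map f) (v ≫ T.map f) h' ≫ add N
  zero_p : ∀ M : C, zero.app M ≫ p.app M = 𝟙 M
  add_p : ∀ M : C, add M ≫ p.app M = (T2 M).pr0 ≫ p.app M
  add_comm' : ∀ (M : C) {X : C} (f g : X ⟶ T.obj M) (h : f ≫ p.app M = g ≫ p.app M),
    (T2 M).pair f g h ≫ add M = (T2 M).pair g f h.symm ≫ add M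
  add_assoc' : ∀ (M : C) {X : C} (f g k : X ⟶ T.obj M)
    (h1 : f ≫ p.app M = g ≫ p.app M) (h2 : g ≫ p.app M = k ≫ p.app M)
    (h3 : ((T2 M).pair f g h1 ≫ add M) ≫ p.app M = k ≫ p.app M)
    (h4 : f ≫ p.app M = ((T2 M).pair g k h2 ≫ add M) ≫ p.app M),
    (T2 M).pair ((T2 M).pair f g h1 ≫ add M) k h3 ≫ add M
      = (T2 M).pair f ((T2 M).pair g k h2 ≫ add M) h4 ≫ add M
  add_zero' : ∀ (M : C) {X : C} (f : X ⟶ T.obj M)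
    (h : f ≫ p.app M = (f ≫ p.app M ≫ zero.app M) ≫ p.app M),
    (T2 M).pair f (f ≫ p.app M ≫ zero.app M) h ≫ add M = f
  l_Tp : ∀ M : C, l.app M ≫ T.map (p.app M) = p.app M ≫ zero.app M
  l_zero : ∀ M : C, zero.app M ≫ l.app M = zero.app M ≫ T.map (zero.app M)
  l_add : ∀ (M : C) {X : C} (f g : X ⟶ T.obj M) (h : f ≫ p.app M = g ≫ p.app M),
    ∃ w : X ⟶ T.obj (T2 M).P,
      w ≫ T.map (T2 M).pr0 = f ≫ l.app M ∧ w ≫ T.map (T2 M).pr1 = g ≫ l.app M ∧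
      (T2 M).pair f g h ≫ add M ≫ l.app M = w ≫ T.map (add M)
  c_p : ∀ M : C, c.app M ≫ p.app (T.obj M) = T.map (p.app M)
  c_zero : ∀ M : C, T.map (zero.app M) ≫ c.app M = zero.app (T.obj M)
  c_add : ∀ (M : C) {X : C} (u v : X ⟶ T.obj (T.obj M))
    (h : u ≫ T.map (p.app M) = v ≫ T.map (p.app M))
    (h' : (u ≫ c.app M) ≫ p.app (T.obj M) = (v ≫ c.app M) ≫ p.app (T.obj M)),
    ∃ w : X ⟶ T.obj (T2 M).P,
      w ≫ T.map (T2 M).pr0 = u ∧ w ≫ T.map (T2 M).pr1 = v ∧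
      w ≫ T.map (add M) ≫ c.app M
        = (T2 (T.obj M)).pair (u ≫ c.app M) (v ≫ c.app M) h' ≫ add (T.obj M)
  l_c : ∀ M : C, l.app M ≫ c.app M = l.app M
  c_c : ∀ M : C, c.app M ≫ c.app M = 𝟙 (T.obj (T.obj M))
  l_l : ∀ M : C, l.app M ≫ T.map (l.app M) = l.app M ≫ l.app (T.obj M)
  c_T_c : ∀ M : C, c.app (T.obj M) ≫ T.map (c.app M) ≫ c.app (T.obj M)
    = T.map (c.app M) ≫ c.app (T.obj M) ≫ T.map (c.app M)
  l_T_c : ∀ M : C, l.app (T.obj M) ≫ T.map (c.app M) ≫ c.app (T.obj M)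
    = c.app M ≫ T.map (l.app M)
  vmu : ∀ M : C, (T2 M).P ⟶ T.obj (T.obj M)
  vmu_spec : ∀ M : C, ∃ w : (T2 M).P ⟶ T.obj (T2 M).P,
    w ≫ T.map (T2 M).pr0 = (T2 M).pr0 ≫ l.app M ∧
    w ≫ T.map (T2 M).pr1 = (T2 M).pr1 ≫ zero.app (T.obj M) ∧
    vmu M = w ≫ T.map (add M)
  vlift : ∀ {X M : C} (f : X ⟶ T.obj (T.obj M)),
    f ≫ T.map (p.app M) = f ≫ T.map (p.app M) ≫ p.app M ≫ zero.app M → (X ⟶ (T2 M).P)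
  vlift_vmu : ∀ {X M : C} (f : X ⟶ T.obj (T.obj M))
    (h : f ≫ T.map (p.app M) = f ≫ T.map (p.app M) ≫ p.app M ≫ zero.app M),
    vlift f h ≫ vmu M = f
  vmu_mono : ∀ {X M : C} (w w' : X ⟶ (T2 M).P), w ≫ vmu M = w' ≫ vmu M → w = w'

/-- Negatives: each tangent bundle is a commutative group bundle. -/
structure HasNegatives {C : Type u} [Category.{v} C] (D : TangentCat C) where
  neg : ∀ M : C, D.T.obj M ⟶ D.T.obj M
  neg_p : ∀ M : C, neg M ≫ D.p.app M = D.p.app M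
  neg_add : ∀ (M : C) {X : C} (f : X ⟶ D.T.obj M)
    (h : f ≫ D.p.app M = (f ≫ neg M) ≫ D.p.app M),
    (D.T2 M).pair f (f ≫ neg M) h ≫ D.add M = f ≫ D.p.app M ≫ D.zero.app M

/-- Fibrewise sum of two maps into a tangent bundle (defined when the maps
agree under `p`; otherwise a default value). -/
noncomputable def TangentCat.hadd (D : TangentCat C) {X M : C}
    (f g : X ⟶ D.T.obj M) : X ⟶ D.T.obj M :=
  if h : f ≫ D.p.app M = g ≫ D.p.app M then (D.T2 M).pair f g h ≫ D.add M else f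

/-- Fibrewise difference `f - g` of two maps into a tangent bundle. -/
noncomputable def TangentCat.sub (D : TangentCat C) (N : HasNegatives D) {X M : C}
    (f g : X ⟶ D.T.obj M) : X ⟶ D.T.obj M :=
  D.hadd f (g ≫ N.neg M)

/-- The bracketing operation `{f}` for the tangent bundle, obtained from the
universality (equalizer property) of the vertical lift. -/
noncomputable def TangentCat.brkT (D : TangentCat C) {X M : C}
    (f : X ⟶ D.T.obj (D.T.obj M)) : X ⟶ D.T.obj M :=
  if h : f ≫ D.T.map (D.p.app M) = f ≫ D.T.map (D.p.app M) ≫ D.p.app M ≫ D.zero.app M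
  then D.vlift f h ≫ (D.T2 M).pr0 else f ≫ D.p.app (D.T.obj M)

/-- The Lie bracket of vector fields: `[w₁,w₂] = {w₁T(w₂) − w₂T(w₁)c}`. -/
noncomputable def TangentCat.lie (D : TangentCat C) (N : HasNegatives D) {M : C}
    (w1 w2 : M ⟶ D.T.obj M) : M ⟶ D.T.obj M :=
  D.brkT (D.sub N (w1 ≫ D.T.map w2) (w2 ≫ D.T.map w1 ≫ D.c.app M))

/-- A differential bundle `𝗊 = (q, +_q, 0_q, λ)` on `E` over `M` in the tangent
category `D`, with chosen pullbacks `E₂` (of `q` along itself) and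
`T(M) ×_M E` (of `p_M` along `q`), both preserved by each `Tⁿ`, together with
the lift axioms and the universality of the lift (in equalizer form). -/
structure DiffBundle {C : Type u} [Category.{v} C] (D : TangentCat C) (E M : C) where
  q : E ⟶ M
  E2 : ChosenPB q q
  TE2 : PBLift D.T E2
  TE2n : ∀ n : ℕ, PBLift (fpow D.T n) E2
  P : ChosenPB (D.p.app M) q
  TP : PBLift D.T P
  TPn : ∀ n : ℕ, PBLift (fpow D.T n) P
  addq : E2.P ⟶ E
  zeroq : M ⟶ E
  lam : E ⟶ D.T.obj E
  addq_q : addq ≫ q = E2.pr0 ≫ q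
  zeroq_q : zeroq ≫ q = 𝟙 M
  addq_comm : ∀ {X : C} (f g : X ⟶ E) (h : f ≫ q = g ≫ q),
    E2.pair f g h ≫ addq = E2.pair g f h.symm ≫ addq
  addq_assoc : ∀ {X : C} (f g k : X ⟶ E)
    (h1 : f ≫ q = g ≫ q) (h2 : g ≫ q = k ≫ q)
    (h3 : (E2.pair f g h1 ≫ addq) ≫ q = k ≫ q)
    (h4 : f ≫ q = (E2.pair g k h2 ≫ addq) ≫ q),
    E2.pair (E2.pair f g h1 ≫ addq) k h3 ≫ addq
      = E2.pair f (E2.pair g k h2 ≫ addq) h4 ≫ addq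
  addq_zero : ∀ {X : C} (f : X ⟶ E) (h : f ≫ q = (f ≫ q ≫ zeroq) ≫ q),
    E2.pair f (f ≫ q ≫ zeroq) h ≫ addq = f
  lam_Tq : lam ≫ D.T.map q = q ≫ D.zero.app M
  lam_zero1 : zeroq ≫ lam = D.zero.app M ≫ D.T.map zeroq
  lam_add1 : ∀ {X : C} (f g : X ⟶ E) (h : f ≫ q = g ≫ q),
    ∃ w : X ⟶ D.T.obj E2.P,
      w ≫ D.T.map E2.pr0 = f ≫ lam ∧ w ≫ D.T.map E2.pr1 = g ≫ lam ∧
      E2.pair f g h ≫ addq ≫ lam = w ≫ D.T.map addq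
  lam_p : lam ≫ D.p.app E = q ≫ zeroq
  lam_zero2 : zeroq ≫ lam = zeroq ≫ D.zero.app E
  lam_add2 : ∀ {X : C} (f g : X ⟶ E) (h : f ≫ q = g ≫ q)
    (h' : (f ≫ lam) ≫ D.p.app E = (g ≫ lam) ≫ D.p.app E),
    E2.pair f g h ≫ addq ≫ lam = (D.T2 E).pair (f ≫ lam) (g ≫ lam) h' ≫ D.add E
  lam_l : lam ≫ D.l.app E = lam ≫ D.T.map lam
  mu : E2.P ⟶ D.T.obj E
  mu_spec : ∃ w : E2.P ⟶ D.T.obj E2.P,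
    w ≫ D.T.map E2.pr0 = E2.pr0 ≫ lam ∧
    w ≫ D.T.map E2.pr1 = E2.pr1 ≫ D.zero.app E ∧
    mu = w ≫ D.T.map addq
  muLift : ∀ {X : C} (f : X ⟶ D.T.obj E),
    f ≫ D.T.map q = f ≫ D.p.app E ≫ q ≫ D.zero.app M → (X ⟶ E2.P)
  muLift_mu : ∀ {X : C} (f : X ⟶ D.T.obj E)
    (h : f ≫ D.T.map q = f ≫ D.p.app E ≫ q ≫ D.zero.app M),
    muLift f h ≫ mu = f
  muLift_q : ∀ {X : C} (f : X ⟶ D.T.obj E)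
    (h : f ≫ D.T.map q = f ≫ D.p.app E ≫ q ≫ D.zero.app M),
    muLift f h ≫ E2.pr0 ≫ q = f ≫ D.p.app E ≫ q
  mu_mono : ∀ {X : C} (w w' : X ⟶ E2.P), w ≫ mu = w' ≫ mu → w = w'

/-- The bracketing operation `{f}` for a differential bundle. -/
noncomputable def DiffBundle.brk {D : TangentCat C} {E M : C} (B : DiffBundle D E M)
    {X : C} (f : X ⟶ D.T.obj E) : X ⟶ E :=
  if h : f ≫ D.T.map B.q = f ≫ D.p.app E ≫ B.q ≫ D.zero.app M
  then B.muLift f h ≫ B.E2.pr0 else f ≫ D.p.app E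

/-- Negatives for a differential bundle (the fibrewise group structure). -/
structure BundleNegatives {D : TangentCat C} {E M : C} (B : DiffBundle D E M) where
  neg : E ⟶ E
  neg_q : neg ≫ B.q = B.q
  neg_add : ∀ {X : C} (f : X ⟶ E) (h : f ≫ B.q = (f ≫ neg) ≫ B.q),
    B.E2.pair f (f ≫ neg) h ≫ B.addq = f ≫ B.q ≫ B.zeroq

/-- Fibrewise sum of maps into `E` for the bundle addition `+_q`. -/
noncomputable def DiffBundle.qadd {D : TangentCat C} {E M : C} (B : DiffBundle D E M)
    {X : C} (f g : X ⟶ E) : X ⟶ E :=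
  if h : f ≫ B.q = g ≫ B.q then B.E2.pair f g h ≫ B.addq else f

/-- Fibrewise difference of maps into `E` for the bundle addition `+_q`. -/
noncomputable def DiffBundle.qsub {D : TangentCat C} {E M : C} (B : DiffBundle D E M)
    (NB : BundleNegatives B) {X : C} (f g : X ⟶ E) : X ⟶ E :=
  B.qadd f (g ≫ NB.neg)

/-- The horizontal descent `U = ⟨T(q), p⟩ : T(E) ⟶ T(M) ×_M E`. -/
def TangentCat.hdesc (D : TangentCat C) {E M : C} (q : E ⟶ M)
    (P : ChosenPB (D.p.app M) q) : D.T.obj E ⟶ P.P :=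
  P.pair (D.T.map q) (D.p.app E) (by simpa using D.p.naturality q)

/-- A vertical connection on the differential bundle with projection `q` and
lift `lam`: a retraction `K` of `lam` with `Kq = pq`, `Kλ = ℓT(K)` and
`Kλ = T(λ)cT(K)` (equivalently, `(K,p)` and `(K,q)` are linear bundle
morphisms). -/
def IsVerticalConnection (D : TangentCat C) {E M : C} (q : E ⟶ M)
    (lam : E ⟶ D.T.obj E) (K : D.T.obj E ⟶ E) : Prop :=
  lam ≫ K = 𝟙 E ∧
  K ≫ q = D.p.app E ≫ q ∧
  K ≫ lam = D.l.app E ≫ D.T.map K ∧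
  K ≫ lam = D.T.map lam ≫ D.c.app E ≫ D.T.map K

/-- Flatness of a vertical connection: `cT(K)K = T(K)K`. -/
def IsFlat (D : TangentCat C) {E : C} (K : D.T.obj E ⟶ E) : Prop :=
  D.c.app E ≫ D.T.map K ≫ K = D.T.map K ≫ K

/-- A horizontal connection on the differential bundle with projection `q`,
lift `lam` and horizontal pullback `P = T(M) ×_M E`: a section `H` of the
horizontal descent `U = ⟨T(q),p⟩` with `Hℓ = (ℓ×0)T(H)` and
`HT(λ)c = (0×λ)T(H)` (equivalently, `(H,1)` is linear into `p_E` and into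
`T(𝗊)`). -/
def IsHorizontalConnection (D : TangentCat C) {E M : C} (q : E ⟶ M)
    (lam : E ⟶ D.T.obj E) (P : ChosenPB (D.p.app M) q)
    (H : P.P ⟶ D.T.obj E) : Prop :=
  H ≫ D.T.map q = P.pr0 ∧
  H ≫ D.p.app E = P.pr1 ∧
  (∃ w : P.P ⟶ D.T.obj P.P,
    w ≫ D.T.map P.pr0 = P.pr0 ≫ D.l.app M ∧
    w ≫ D.T.map P.pr1 = P.pr1 ≫ D.zero.app E ∧
    H ≫ D.l.app E = w ≫ D.T.map H) ∧
  (∃ w : P.P ⟶ D.T.obj P.P,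
    w ≫ D.T.map P.pr0 = P.pr0 ≫ D.zero.app (D.T.obj M) ∧
    w ≫ D.T.map P.pr1 = P.pr1 ≫ lam ∧
    H ≫ D.T.map lam ≫ D.c.app E = w ≫ D.T.map H)

/-- A (full) connection, in unbundled form: a vertical connection `K` and a
horizontal connection `H` with `HK = π₁q0_q` and `⟨K,p⟩μ + UH = 1`. -/
noncomputable def IsConnectionPair (D : TangentCat C) {E M : C} (q : E ⟶ M)
    (lam : E ⟶ D.T.obj E) (EP : ChosenPB q q) (zeroq : M ⟶ E)
    (mu : EP.P ⟶ D.T.obj E) (P : ChosenPB (D.p.app M) q)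
    (K : D.T.obj E ⟶ E) (H : P.P ⟶ D.T.obj E) : Prop :=
  IsVerticalConnection D q lam K ∧
  IsHorizontalConnection D q lam P H ∧
  H ≫ K = P.pr1 ≫ q ≫ zeroq ∧
  ∃ R : D.T.obj E ⟶ EP.P, R ≫ EP.pr0 = K ∧ R ≫ EP.pr1 = D.p.app E ∧
    D.hadd (R ≫ mu) (D.hdesc q P ≫ H) = 𝟙 (D.T.obj E)

/-- A connection on a differential bundle. -/
noncomputable def IsConnection {D : TangentCat C} {E M : C} (B : DiffBundle D E M)
    (K : D.T.obj E ⟶ E) (H : B.P.P ⟶ D.T.obj E) : Prop :=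
  IsConnectionPair D B.q B.lam B.E2 B.zeroq B.mu B.P K H

/-- A Finsler connection on a differential bundle. -/
def IsFinslerConnection {D : TangentCat C} {E M : C} (B : DiffBundle D E M)
    (R : D.T.obj E ⟶ B.E2.P) : Prop :=
  B.mu ≫ R = 𝟙 B.E2.P ∧
  R ≫ B.E2.pr1 = D.p.app E ∧
  R ≫ B.E2.pr0 ≫ B.lam = D.T.map B.lam ≫ D.c.app E ≫ D.T.map (R ≫ B.E2.pr0) ∧
  D.l.app E ≫ D.T.map (R ≫ B.E2.pr0) = R ≫ B.E2.pr0 ≫ B.lam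

/-- The covariant derivative `∇_K(w,s) = wT(s)K`. -/
def nabla (D : TangentCat C) {E M : C} (K : D.T.obj E ⟶ E)
    (w : M ⟶ D.T.obj M) (s : M ⟶ E) : M ⟶ E :=
  w ≫ D.T.map s ≫ K

section AuxStmt17

variable {C : Type u} [Category.{v} C]

namespace ChosenPB

theorem pair_congr {A B Z : C} {f : A ⟶ Z} {g : B ⟶ Z} (PB : ChosenPB f g)
    {X : C} {u u' : X ⟶ A} {v v' : X ⟶ B} {h : u ≫ f = v ≫ g} {h' : u' ≫ f = v' ≫ g}
    (hu : u = u') (hv : v = v') : PB.pair u v h = PB.pair u' v' h' := by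
  subst hu; subst hv; rfl

theorem comp_pair {A B Z : C} {f : A ⟶ Z} {g : B ⟶ Z} (PB : ChosenPB f g)
    {X Y : C} (x : Y ⟶ X) {u : X ⟶ A} {v : X ⟶ B} (h : u ≫ f = v ≫ g) :
    x ≫ PB.pair u v h = PB.pair (x ≫ u) (x ≫ v)
      (by rw [Category.assoc, Category.assoc, h]) :=
  PB.hom_ext _ _
    (by rw [Category.assoc, PB.pair_pr0, PB.pair_pr0])
    (by rw [Category.assoc, PB.pair_pr1, PB.pair_pr1])

theorem pair_id {A B Z : C} {f : A ⟶ Z} {g : B ⟶ Z} (PB : ChosenPB f g) :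
    PB.pair PB.pr0 PB.pr1 PB.comm = 𝟙 PB.P :=
  PB.hom_ext _ _ (by rw [PB.pair_pr0, Category.id_comp])
    (by rw [PB.pair_pr1, Category.id_comp])

end ChosenPB

namespace PBLift

theorem pair_congr {T : C ⥤ C} {A B Z : C} {f : A ⟶ Z} {g : B ⟶ Z} {PB : ChosenPB f g}
    (L : PBLift T PB) {X : C} {u u' : X ⟶ T.obj A} {v v' : X ⟶ T.obj B}
    {h : u ≫ T.map f = v ≫ T.map g} {h' : u' ≫ T.map f = v' ≫ T.map g}
    (hu : u = u') (hv : v = v') : L.pair u v h = L.pair u' v' h' := by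
  subst hu; subst hv; rfl

theorem comp_pair {T : C ⥤ C} {A B Z : C} {f : A ⟶ Z} {g : B ⟶ Z} {PB : ChosenPB f g}
    (L : PBLift T PB) {X Y : C} (x : Y ⟶ X) {u : X ⟶ T.obj A} {v : X ⟶ T.obj B}
    (h : u ≫ T.map f = v ≫ T.map g) :
    x ≫ L.pair u v h = L.pair (x ≫ u) (x ≫ v)
      (by rw [Category.assoc, Category.assoc, h]) :=
  L.hom_ext _ _
    (by rw [Category.assoc, L.pair_pr0, L.pair_pr0])
    (by rw [Category.assoc, L.pair_pr1, L.pair_pr1])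

/-- Push a pairing through `T`. -/
theorem map_pair {T : C ⥤ C} {A B Z : C} {f : A ⟶ Z} {g : B ⟶ Z} {PB : ChosenPB f g}
    (L : PBLift T PB) {W X : C} (x : X ⟶ T.obj W) {u : W ⟶ A} {v : W ⟶ B}
    (h : u ≫ f = v ≫ g) :
    x ≫ T.map (PB.pair u v h) = L.pair (x ≫ T.map u) (x ≫ T.map v)
      (by rw [Category.assoc, Category.assoc, ← T.map_comp, ← T.map_comp, h]) :=
  L.hom_ext _ _
    (by rw [Category.assoc, ← T.map_comp, PB.pair_pr0, L.pair_pr0])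
    (by rw [Category.assoc, ← T.map_comp, PB.pair_pr1, L.pair_pr1])

end PBLift

namespace TangentCat

variable (D : TangentCat C)

theorem p_nat {A B : C} (g : A ⟶ B) :
    D.T.map g ≫ D.p.app B = D.p.app A ≫ g := by
  simpa using D.p.naturality g

theorem zero_nat {A B : C} (g : A ⟶ B) :
    g ≫ D.zero.app B = D.zero.app A ≫ D.T.map g := by
  simpa using D.zero.naturality g

theorem l_nat {A B : C} (g : A ⟶ B) :
    D.T.map g ≫ D.l.app B = D.l.app A ≫ D.T.map (D.T.map g) := by
  simpa using D.l.naturality g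

theorem c_nat {A B : C} (g : A ⟶ B) :
    D.T.map (D.T.map g) ≫ D.c.app B = D.c.app A ≫ D.T.map (D.T.map g) := by
  simpa using D.c.naturality g

theorem c_Tp (A : C) : D.c.app A ≫ D.T.map (D.p.app A) = D.p.app (D.T.obj A) := by
  rw [← D.c_p, ← Category.assoc, D.c_c]; simp

theorem zero_c (A : C) :
    D.zero.app (D.T.obj A) ≫ D.c.app A = D.T.map (D.zero.app A) := by
  rw [← D.c_zero, Category.assoc, D.c_c, Category.comp_id]

theorem l_pT (A : C) :
    D.l.app A ≫ D.p.app (D.T.obj A) = D.p.app A ≫ D.zero.app A := by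
  rw [← D.l_c A, Category.assoc, D.c_p, D.l_Tp]

end TangentCat

/-- fibrewise elements of the tangent bundle over a fixed base map. -/
structure FibN (D : TangentCat C) (N : HasNegatives D) (X A : C) (m : X ⟶ A) where
  f : X ⟶ D.T.obj A
  hp : f ≫ D.p.app A = m

namespace FibN

variable {D : TangentCat C} {N : HasNegatives D} {X A : C} {m : X ⟶ A}

theorem ext' {a b : FibN D N X A m} (h : a.f = b.f) : a = b := by
  cases a; cases b; cases h; rfl

instance : Add (FibN D N X A m) :=
  ⟨fun a b => ⟨(D.T2 A).pair a.f b.f (by rw [a.hp, b.hp]) ≫ D.add A, by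
    rw [Category.assoc, D.add_p, ← Category.assoc, (D.T2 A).pair_pr0, a.hp]⟩⟩

instance : Zero (FibN D N X A m) :=
  ⟨⟨m ≫ D.zero.app A, by rw [Category.assoc, D.zero_p, Category.comp_id]⟩⟩

instance : Neg (FibN D N X A m) :=
  ⟨fun a => ⟨a.f ≫ N.neg A, by rw [Category.assoc, N.neg_p, a.hp]⟩⟩

theorem add_f (a b : FibN D N X A m) :
    (a + b).f = (D.T2 A).pair a.f b.f (by rw [a.hp, b.hp]) ≫ D.add A := rfl

theorem zero_f : (0 : FibN D N X A m).f = m ≫ D.zero.app A := rfl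

theorem neg_f (a : FibN D N X A m) : (-a).f = a.f ≫ N.neg A := rfl

instance : AddGroup (FibN D N X A m) :=
  AddGroup.ofLeftAxioms
    (fun a b c => ext' (D.add_assoc' A a.f b.f c.f (by rw [a.hp, b.hp]) (by rw [b.hp, c.hp])
      (by rw [Category.assoc, D.add_p, ← Category.assoc, (D.T2 A).pair_pr0, a.hp, c.hp])
      (by rw [Category.assoc, D.add_p, ← Category.assoc, (D.T2 A).pair_pr0, a.hp, b.hp])))
    (fun a => ext' (by
      have e1 : (0 : FibN D N X A m).f = a.f ≫ D.p.app A ≫ D.zero.app A := by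
        rw [zero_f, ← Category.assoc, a.hp]
      have e2 : (0 + a).f = (D.T2 A).pair (a.f ≫ D.p.app A ≫ D.zero.app A) a.f
          (by simp [D.zero_p]) ≫ D.add A := by
        rw [add_f]
        exact congrArg (· ≫ D.add A) ((D.T2 A).pair_congr e1 rfl)
      rw [e2, D.add_comm' A _ _ _]
      exact D.add_zero' A a.f (by simp [D.zero_p])))
    (fun a => ext' (by
      have e2 : (-a + a).f = (D.T2 A).pair (a.f ≫ N.neg A) a.f
          (by rw [Category.assoc, N.neg_p]) ≫ D.add A := rfl
      rw [e2, D.add_comm' A _ _ _,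
        N.neg_add A a.f (by rw [Category.assoc, N.neg_p])]
      rw [zero_f, ← Category.assoc, a.hp]))

instance : AddCommGroup (FibN D N X A m) :=
  { (inferInstance : AddGroup (FibN D N X A m)) with
    add_comm := fun a b => ext' (D.add_comm' A a.f b.f (by rw [a.hp, b.hp])) }

theorem sub_f (a b : FibN D N X A m) :
    (a - b).f = (D.T2 A).pair a.f (b.f ≫ N.neg A)
      (by rw [a.hp, Category.assoc, N.neg_p, b.hp]) ≫ D.add A := by
  rw [sub_eq_add_neg]; rfl

theorem hadd_f (a b : FibN D N X A m) : D.hadd a.f b.f = (a + b).f := by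
  unfold TangentCat.hadd
  rw [dif_pos (show a.f ≫ D.p.app A = b.f ≫ D.p.app A by rw [a.hp, b.hp])]
  rfl

theorem hsub_f (a b : FibN D N X A m) : D.sub N a.f b.f = (a - b).f := by
  have h1 : D.sub N a.f b.f = D.hadd a.f ((-b).f) := rfl
  rw [h1, hadd_f, ← sub_eq_add_neg]

/-- Post-composition with `T g`. -/
def push {A' : C} (g : A ⟶ A') (a : FibN D N X A m) : FibN D N X A' (m ≫ g) :=
  ⟨a.f ≫ D.T.map g, by rw [Category.assoc, D.p_nat g, ← Category.assoc, a.hp]⟩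

theorem push_add {A' : C} (g : A ⟶ A') (a b : FibN D N X A m) :
    push g (a + b) = push g a + push g b := ext' (by
  show (a + b).f ≫ D.T.map g = _
  rw [add_f, add_f, Category.assoc]
  exact D.add_nat g a.f b.f _ _)

/-- Post-composition with `T g` as an additive homomorphism. -/
def pushHom {A' : C} (g : A ⟶ A') : FibN D N X A m →+ FibN D N X A' (m ≫ g) :=
  AddMonoidHom.mk' (push g) (push_add g)

theorem pushHom_f {A' : C} (g : A ⟶ A') (a : FibN D N X A m) :
    (pushHom g a).f = a.f ≫ D.T.map g := rfl

end FibN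

/-- negation commutes with `T g`. -/
theorem HasNegatives.neg_map {D : TangentCat C} (N : HasNegatives D) {X A A' : C}
    (g : A ⟶ A') (x : X ⟶ D.T.obj A) :
    (x ≫ N.neg A) ≫ D.T.map g = (x ≫ D.T.map g) ≫ N.neg A' := by
  have h := congrArg FibN.f (map_neg (FibN.pushHom (N := N) (m := x ≫ D.p.app A) g)
    ⟨x, rfl⟩)
  exact h

section DLevel

variable {C : Type u} [Category.{v} C] (D : TangentCat C)

/-- Cancellation in the `T`-image additive structure of the tangent bundle. -/
theorem TangentCat.Tcancel (N : HasNegatives D) {A X : C} {u v v' : X ⟶ D.T.obj (D.T.obj A)}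
    (hv : u ≫ D.T.map (D.p.app A) = v ≫ D.T.map (D.p.app A))
    (hv' : u ≫ D.T.map (D.p.app A) = v' ≫ D.T.map (D.p.app A))
    (heq : (D.T2T A).pair u v hv ≫ D.T.map (D.add A)
      = (D.T2T A).pair u v' hv' ≫ D.T.map (D.add A)) : v = v' := by
  have base : (D.T2 A).pair ((D.T2 A).pair (D.T2 A).pr0 (D.T2 A).pr1 (D.T2 A).comm ≫ D.add A)
      ((D.T2 A).pr0 ≫ N.neg A)
      (by rw [Category.assoc, D.add_p, ← Category.assoc, (D.T2 A).pair_pr0,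
        Category.assoc, N.neg_p])
      ≫ D.add A = (D.T2 A).pr1 := by
    have habel : ((⟨(D.T2 A).pr0, rfl⟩ + ⟨(D.T2 A).pr1, (D.T2 A).comm.symm⟩
        + -⟨(D.T2 A).pr0, rfl⟩ :
        FibN D N (D.T2 A).P A ((D.T2 A).pr0 ≫ D.p.app A)))
        = ⟨(D.T2 A).pr1, (D.T2 A).comm.symm⟩ := by abel
    exact congrArg FibN.f habel
  have hT := congrArg D.T.map base
  have ev : ∀ (v₀ : X ⟶ D.T.obj (D.T.obj A))
      (hv₀ : u ≫ D.T.map (D.p.app A) = v₀ ≫ D.T.map (D.p.app A)),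
      v₀ = (D.T2T A).pair ((D.T2T A).pair u v₀ hv₀ ≫ D.T.map (D.add A))
          (u ≫ D.T.map (N.neg A))
          (by
            simp only [Category.assoc, ← Functor.map_comp]
            rw [N.neg_p, D.add_p]
            simp only [Functor.map_comp]
            rw [← Category.assoc, (D.T2T A).pair_pr0])
          ≫ D.T.map (D.add A) := by
    intro v₀ hv₀
    have e1 : (D.T2T A).pair u v₀ hv₀
        ≫ D.T.map ((D.T2 A).pair (D.T2 A).pr0 (D.T2 A).pr1 (D.T2 A).comm ≫ D.add A)
        = (D.T2T A).pair u v₀ hv₀ ≫ D.T.map (D.add A) := by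
      rw [(D.T2 A).pair_id, Category.id_comp]
    have e2 : (D.T2T A).pair u v₀ hv₀ ≫ D.T.map ((D.T2 A).pr0 ≫ N.neg A)
        = u ≫ D.T.map (N.neg A) := by
      rw [D.T.map_comp, ← Category.assoc, (D.T2T A).pair_pr0]
    conv_lhs => rw [← (D.T2T A).pair_pr1 u v₀ hv₀, ← hT]
    rw [D.T.map_comp, ← Category.assoc, (D.T2T A).map_pair]
    exact congrArg (· ≫ D.T.map (D.add A)) ((D.T2T A).pair_congr e1 e2)
  have h1 := ev v hv
  have h2 := ev v' hv'
  rw [h1, h2]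
  exact congrArg (· ≫ D.T.map (D.add A)) ((D.T2T A).pair_congr heq rfl)

/-- `c` converts `T`-image sums into fibrewise sums on `T(TA)`. -/
theorem TangentCat.Timg_c {A X : C} (x y : X ⟶ D.T.obj (D.T.obj A))
    (hx : x ≫ D.T.map (D.p.app A) = y ≫ D.T.map (D.p.app A))
    (hx' : (x ≫ D.c.app A) ≫ D.p.app (D.T.obj A) = (y ≫ D.c.app A) ≫ D.p.app (D.T.obj A)) :
    (D.T2T A).pair x y hx ≫ D.T.map (D.add A) ≫ D.c.app A
      = (D.T2 (D.T.obj A)).pair (x ≫ D.c.app A) (y ≫ D.c.app A) hx' ≫ D.add (D.T.obj A) := by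
  obtain ⟨w, hw0, hw1, hw2⟩ := D.c_add A x y hx hx'
  have hww : w = (D.T2T A).pair x y hx :=
    (D.T2T A).hom_ext _ _ (by rw [hw0, (D.T2T A).pair_pr0])
      (by rw [hw1, (D.T2T A).pair_pr1])
  rw [← hww]
  exact hw2

/-- `c` converts fibrewise sums on `T(TA)` into `T`-image sums. -/
theorem TangentCat.padd_c {A X : C} (a b : X ⟶ D.T.obj (D.T.obj A))
    (h : a ≫ D.p.app (D.T.obj A) = b ≫ D.p.app (D.T.obj A))
    (h' : (a ≫ D.c.app A) ≫ D.T.map (D.p.app A) = (b ≫ D.c.app A) ≫ D.T.map (D.p.app A)) :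
    ((D.T2 (D.T.obj A)).pair a b h ≫ D.add (D.T.obj A)) ≫ D.c.app A
      = (D.T2T A).pair (a ≫ D.c.app A) (b ≫ D.c.app A) h' ≫ D.T.map (D.add A) := by
  have e : (D.T2T A).pair (a ≫ D.c.app A) (b ≫ D.c.app A) h' ≫ D.T.map (D.add A) ≫ D.c.app A
      = (D.T2 (D.T.obj A)).pair a b h ≫ D.add (D.T.obj A) := by
    rw [D.Timg_c (a ≫ D.c.app A) (b ≫ D.c.app A) h'
      (by simpa [D.c_p, Category.assoc] using h')]
    exact congrArg (· ≫ D.add (D.T.obj A)) ((D.T2 (D.T.obj A)).pair_congr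
      (by rw [Category.assoc, D.c_c, Category.comp_id])
      (by rw [Category.assoc, D.c_c, Category.comp_id]))
  rw [← e]
  simp [D.c_c]

/-- Negation commutes with the vertical lift. -/
theorem HasNegatives.neg_l (N : HasNegatives D) (A : C) :
    N.neg A ≫ D.l.app A = D.l.app A ≫ D.T.map (N.neg A) := by
  have hpf : 𝟙 (D.T.obj A) ≫ D.p.app A = N.neg A ≫ D.p.app A := by
    rw [Category.id_comp, N.neg_p]
  have hval : (D.T2 A).pair (𝟙 (D.T.obj A)) (N.neg A) hpf ≫ D.add A
      = D.p.app A ≫ D.zero.app A := by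
    have h0 := N.neg_add A (𝟙 (D.T.obj A)) (by simp [N.neg_p])
    calc (D.T2 A).pair (𝟙 (D.T.obj A)) (N.neg A) hpf ≫ D.add A
        = (D.T2 A).pair (𝟙 (D.T.obj A)) (𝟙 (D.T.obj A) ≫ N.neg A) _ ≫ D.add A :=
          congrArg (· ≫ D.add A) ((D.T2 A).pair_congr rfl (Category.id_comp _).symm)
      _ = 𝟙 (D.T.obj A) ≫ D.p.app A ≫ D.zero.app A := h0
      _ = D.p.app A ≫ D.zero.app A := Category.id_comp _
  obtain ⟨w, hw0, hw1, hw⟩ := D.l_add A (𝟙 (D.T.obj A)) (N.neg A) hpf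
  have hww : w = (D.T2T A).pair (D.l.app A) (N.neg A ≫ D.l.app A)
      (by rw [D.l_Tp, Category.assoc, D.l_Tp, ← Category.assoc, N.neg_p]) :=
    (D.T2T A).hom_ext _ _
      (by rw [hw0, Category.id_comp, (D.T2T A).pair_pr0])
      (by rw [hw1, (D.T2T A).pair_pr1])
  have s1 : (D.T2T A).pair (D.l.app A) (N.neg A ≫ D.l.app A)
      (by rw [D.l_Tp, Category.assoc, D.l_Tp, ← Category.assoc, N.neg_p])
      ≫ D.T.map (D.add A)
      = D.p.app A ≫ D.zero.app A ≫ D.T.map (D.zero.app A) := by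
    rw [← hww, ← hw, ← Category.assoc, hval, Category.assoc, D.l_zero]
  have s2 : (D.T2T A).pair (D.l.app A) (D.l.app A ≫ D.T.map (N.neg A))
      (by rw [Category.assoc, ← D.T.map_comp, N.neg_p])
      ≫ D.T.map (D.add A)
      = D.p.app A ≫ D.zero.app A ≫ D.T.map (D.zero.app A) := by
    have e1 : D.l.app A ≫ D.T.map ((D.T2 A).pair (𝟙 (D.T.obj A)) (N.neg A) hpf)
        = (D.T2T A).pair (D.l.app A) (D.l.app A ≫ D.T.map (N.neg A))
          (by rw [Category.assoc, ← D.T.map_comp, N.neg_p]) := by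
      rw [(D.T2T A).map_pair]
      exact (D.T2T A).pair_congr (by rw [D.T.map_id, Category.comp_id]) rfl
    rw [← e1, Category.assoc, ← D.T.map_comp, hval, D.T.map_comp, ← Category.assoc,
      D.l_Tp, Category.assoc]
  exact D.Tcancel N _ _ (s1.trans s2.symm)

end DLevel
section BLevel

variable {C : Type u} [Category.{v} C] {D : TangentCat C} {E M : C} (B : DiffBundle D E M)

namespace DiffBundle

theorem TT_hom_ext {X : C} (w w' : X ⟶ D.T.obj (D.T.obj B.E2.P))
    (h0 : w ≫ D.T.map (D.T.map B.E2.pr0) = w' ≫ D.T.map (D.T.map B.E2.pr0))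
    (h1 : w ≫ D.T.map (D.T.map B.E2.pr1) = w' ≫ D.T.map (D.T.map B.E2.pr1)) : w = w' :=
  (B.TE2n 2).hom_ext w w' h0 h1

theorem zero_addq {X : C} (f : X ⟶ E)
    (h : (f ≫ B.q ≫ B.zeroq) ≫ B.q = f ≫ B.q) :
    B.E2.pair (f ≫ B.q ≫ B.zeroq) f h ≫ B.addq = f := by
  rw [B.addq_comm]
  exact B.addq_zero f (by simp [B.zeroq_q])

theorem Timg_zero {X : C} (x : X ⟶ D.T.obj E)
    (h : x ≫ D.T.map B.q = (x ≫ D.T.map B.q ≫ D.T.map B.zeroq) ≫ D.T.map B.q) :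
    B.TE2.pair x (x ≫ D.T.map B.q ≫ D.T.map B.zeroq) h ≫ D.T.map B.addq = x := by
  have base : B.E2.pair (𝟙 E) (B.q ≫ B.zeroq) (by simp [B.zeroq_q]) ≫ B.addq = 𝟙 E := by
    exact (congrArg (· ≫ B.addq) (B.E2.pair_congr rfl (Category.id_comp _).symm)).trans
      (B.addq_zero (𝟙 E) (by simp [B.zeroq_q]))
  have e1 : x ≫ D.T.map (B.E2.pair (𝟙 E) (B.q ≫ B.zeroq) (by simp [B.zeroq_q]))
      = B.TE2.pair x (x ≫ D.T.map B.q ≫ D.T.map B.zeroq) h := by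
    rw [B.TE2.map_pair]
    exact B.TE2.pair_congr (by rw [D.T.map_id, Category.comp_id]) (by rw [D.T.map_comp])
  rw [← e1, Category.assoc, ← D.T.map_comp, base, D.T.map_id, Category.comp_id]

theorem Timg_comm {X : C} (u v : X ⟶ D.T.obj E)
    (h : u ≫ D.T.map B.q = v ≫ D.T.map B.q) :
    B.TE2.pair u v h ≫ D.T.map B.addq = B.TE2.pair v u h.symm ≫ D.T.map B.addq := by
  have sw : B.addq = B.E2.pair B.E2.pr1 B.E2.pr0 B.E2.comm.symm ≫ B.addq := by
    conv_lhs => rw [← Category.id_comp B.addq, ← B.E2.pair_id]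
    exact B.addq_comm B.E2.pr0 B.E2.pr1 B.E2.comm
  have e1 : B.TE2.pair u v h ≫ D.T.map (B.E2.pair B.E2.pr1 B.E2.pr0 B.E2.comm.symm)
      = B.TE2.pair v u h.symm := by
    rw [B.TE2.map_pair]
    exact B.TE2.pair_congr (B.TE2.pair_pr1 u v h) (B.TE2.pair_pr0 u v h)
  conv_lhs => rw [sw, D.T.map_comp, ← Category.assoc, e1]

theorem Timg_p {X : C} (u v : X ⟶ D.T.obj E)
    (h : u ≫ D.T.map B.q = v ≫ D.T.map B.q)
    (h2 : (u ≫ D.p.app E) ≫ B.q = (v ≫ D.p.app E) ≫ B.q) :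
    B.TE2.pair u v h ≫ D.p.app B.E2.P
      = B.E2.pair (u ≫ D.p.app E) (v ≫ D.p.app E) h2 :=
  B.E2.hom_ext _ _
    (by rw [Category.assoc, ← D.p_nat B.E2.pr0, ← Category.assoc, B.TE2.pair_pr0,
      B.E2.pair_pr0])
    (by rw [Category.assoc, ← D.p_nat B.E2.pr1, ← Category.assoc, B.TE2.pair_pr1,
      B.E2.pair_pr1])

theorem fib_lam_Tq {X : C} (u v : X ⟶ E) (h : u ≫ B.q = v ≫ B.q) :
    (u ≫ B.lam) ≫ D.T.map B.q = (v ≫ B.lam) ≫ D.T.map B.q := by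
  rw [Category.assoc, B.lam_Tq, Category.assoc, B.lam_Tq, ← Category.assoc, h, Category.assoc]

theorem fib_lam_zero {X : C} (a e : X ⟶ E) (h : a ≫ B.q = e ≫ B.q) :
    (a ≫ B.lam) ≫ D.T.map B.q = (e ≫ D.zero.app E) ≫ D.T.map B.q := by
  rw [Category.assoc, B.lam_Tq, Category.assoc, ← D.zero_nat B.q, ← Category.assoc, h,
    Category.assoc]

theorem fib_lam_p {X : C} (u v : X ⟶ E) (h : u ≫ B.q = v ≫ B.q) :
    (u ≫ B.lam) ≫ D.p.app E = (v ≫ B.lam) ≫ D.p.app E := by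
  rw [Category.assoc, B.lam_p, Category.assoc, B.lam_p, ← Category.assoc, h, Category.assoc]

theorem mu_fib : (B.E2.pr0 ≫ B.lam) ≫ D.T.map B.q
    = (B.E2.pr1 ≫ D.zero.app E) ≫ D.T.map B.q :=
  B.fib_lam_zero B.E2.pr0 B.E2.pr1 B.E2.comm

theorem mu_form :
    B.mu = B.TE2.pair (B.E2.pr0 ≫ B.lam) (B.E2.pr1 ≫ D.zero.app E) B.mu_fib
      ≫ D.T.map B.addq := by
  obtain ⟨w, hw0, hw1, hmu⟩ := B.mu_spec
  rw [hmu]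
  exact congrArg (· ≫ D.T.map B.addq)
    (B.TE2.hom_ext _ _ (by rw [hw0, B.TE2.pair_pr0]) (by rw [hw1, B.TE2.pair_pr1]))

theorem pair_mu {X : C} (a e : X ⟶ E) (h : a ≫ B.q = e ≫ B.q)
    (h' : (a ≫ B.lam) ≫ D.T.map B.q = (e ≫ D.zero.app E) ≫ D.T.map B.q) :
    B.E2.pair a e h ≫ B.mu
      = B.TE2.pair (a ≫ B.lam) (e ≫ D.zero.app E) h' ≫ D.T.map B.addq := by
  rw [B.mu_form, ← Category.assoc, B.TE2.comp_pair]
  exact congrArg (· ≫ D.T.map B.addq) (B.TE2.pair_congr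
    (by rw [← Category.assoc, B.E2.pair_pr0])
    (by rw [← Category.assoc, B.E2.pair_pr1]))

theorem mu_p : B.mu ≫ D.p.app E = B.E2.pr1 := by
  have c1 : (B.E2.pr0 ≫ B.lam) ≫ D.p.app E = B.E2.pr1 ≫ B.q ≫ B.zeroq := by
    rw [Category.assoc, B.lam_p, ← Category.assoc, B.E2.comm, Category.assoc]
  have c2 : (B.E2.pr1 ≫ D.zero.app E) ≫ D.p.app E = B.E2.pr1 := by
    rw [Category.assoc, D.zero_p, Category.comp_id]
  rw [B.mu_form, Category.assoc, D.p_nat B.addq, ← Category.assoc,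
    B.Timg_p _ _ B.mu_fib (by rw [c1, c2, Category.assoc, Category.assoc, B.zeroq_q,
      Category.comp_id])]
  exact (congrArg (· ≫ B.addq) (B.E2.pair_congr c1 c2)).trans
    (B.zero_addq B.E2.pr1 (by simp [B.zeroq_q]))

theorem mu_Tq : B.mu ≫ D.T.map B.q = B.E2.pr0 ≫ B.q ≫ D.zero.app M := by
  rw [B.mu_form, Category.assoc, ← D.T.map_comp, B.addq_q, D.T.map_comp, ← Category.assoc,
    B.TE2.pair_pr0, Category.assoc, B.lam_Tq]

theorem lam_Tq_Tzq : B.lam ≫ D.T.map B.q ≫ D.T.map B.zeroq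
    = B.q ≫ B.zeroq ≫ D.zero.app E := by
  rw [← Category.assoc, B.lam_Tq, Category.assoc, ← D.zero_nat B.zeroq]

theorem lam_factor {X : C} (a : X ⟶ E)
    (h : a ≫ B.q = (a ≫ B.q ≫ B.zeroq) ≫ B.q) :
    B.E2.pair a (a ≫ B.q ≫ B.zeroq) h ≫ B.mu = a ≫ B.lam := by
  rw [B.pair_mu a _ h (B.fib_lam_zero a _ h)]
  have c2 : (a ≫ B.q ≫ B.zeroq) ≫ D.zero.app E
      = (a ≫ B.lam) ≫ D.T.map B.q ≫ D.T.map B.zeroq := by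
    simp only [Category.assoc]
    rw [B.lam_Tq_Tzq]
  exact (congrArg (· ≫ D.T.map B.addq) (B.TE2.pair_congr rfl c2)).trans
    (B.Timg_zero (a ≫ B.lam)
      (by simp only [Category.assoc, ← Functor.map_comp, B.zeroq_q, Category.comp_id]))

theorem lam_mono {X : C} {a b : X ⟶ E} (h : a ≫ B.lam = b ≫ B.lam) : a = b := by
  have hq0 : a ≫ B.q ≫ B.zeroq = b ≫ B.q ≫ B.zeroq := by
    have h2 := congrArg (· ≫ D.p.app E) h
    simpa [B.lam_p] using h2
  have pf1 : a ≫ B.q = (a ≫ B.q ≫ B.zeroq) ≫ B.q := by simp [B.zeroq_q]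
  have pf2 : b ≫ B.q = (b ≫ B.q ≫ B.zeroq) ≫ B.q := by simp [B.zeroq_q]
  have hpair : B.E2.pair a (a ≫ B.q ≫ B.zeroq) pf1
      = B.E2.pair b (b ≫ B.q ≫ B.zeroq) pf2 :=
    B.mu_mono _ _ (by rw [B.lam_factor a pf1, B.lam_factor b pf2, h])
  have h0 := congrArg (· ≫ B.E2.pr0) hpair
  simpa [B.E2.pair_pr0] using h0

theorem addq_lam (hb : (B.E2.pr0 ≫ B.lam) ≫ D.p.app E = (B.E2.pr1 ≫ B.lam) ≫ D.p.app E) :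
    B.addq ≫ B.lam
      = (D.T2 E).pair (B.E2.pr0 ≫ B.lam) (B.E2.pr1 ≫ B.lam) hb ≫ D.add E := by
  have h0 := B.lam_add2 B.E2.pr0 B.E2.pr1 B.E2.comm (B.fib_lam_p _ _ B.E2.comm)
  rw [B.E2.pair_id, Category.id_comp] at h0
  exact h0

theorem addq_lam1 (hb : (B.E2.pr0 ≫ B.lam) ≫ D.T.map B.q
      = (B.E2.pr1 ≫ B.lam) ≫ D.T.map B.q) :
    B.addq ≫ B.lam
      = B.TE2.pair (B.E2.pr0 ≫ B.lam) (B.E2.pr1 ≫ B.lam) hb ≫ D.T.map B.addq := by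
  obtain ⟨w, h0, h1, hw⟩ := B.lam_add1 B.E2.pr0 B.E2.pr1 B.E2.comm
  rw [B.E2.pair_id, Category.id_comp] at hw
  rw [hw]
  exact congrArg (· ≫ D.T.map B.addq)
    (B.TE2.hom_ext _ _ (by rw [h0, B.TE2.pair_pr0]) (by rw [h1, B.TE2.pair_pr1]))

theorem zeroE_mu (h : (B.q ≫ B.zeroq) ≫ B.q = 𝟙 E ≫ B.q) :
    B.E2.pair (B.q ≫ B.zeroq) (𝟙 E) h ≫ B.mu = D.zero.app E := by
  have c1 : (B.q ≫ B.zeroq) ≫ B.lam = B.q ≫ B.zeroq ≫ D.zero.app E := by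
    rw [Category.assoc, B.lam_zero2]
  have c2 : 𝟙 E ≫ D.zero.app E = D.zero.app E := Category.id_comp _
  have c3 : D.zero.app E ≫ D.T.map B.q ≫ D.T.map B.zeroq
      = B.q ≫ B.zeroq ≫ D.zero.app E := by
    rw [← Category.assoc, ← D.zero_nat B.q, Category.assoc, ← D.zero_nat B.zeroq]
  have pfB : (B.q ≫ B.zeroq ≫ D.zero.app E) ≫ D.T.map B.q
      = D.zero.app E ≫ D.T.map B.q := by
    rw [← c3, Category.assoc, ← Functor.map_comp, ← Functor.map_comp, Category.assoc,
      B.zeroq_q, Category.comp_id]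
  have pfD : D.zero.app E ≫ D.T.map B.q
      = (D.zero.app E ≫ D.T.map B.q ≫ D.T.map B.zeroq) ≫ D.T.map B.q := by
    rw [c3, ← pfB]
  calc B.E2.pair (B.q ≫ B.zeroq) (𝟙 E) h ≫ B.mu
      = B.TE2.pair ((B.q ≫ B.zeroq) ≫ B.lam) (𝟙 E ≫ D.zero.app E)
          (B.fib_lam_zero _ _ h) ≫ D.T.map B.addq :=
        B.pair_mu _ _ h (B.fib_lam_zero _ _ h)
    _ = B.TE2.pair (B.q ≫ B.zeroq ≫ D.zero.app E) (D.zero.app E) pfB ≫ D.T.map B.addq :=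
        congrArg (· ≫ D.T.map B.addq) (B.TE2.pair_congr c1 c2)
    _ = B.TE2.pair (D.zero.app E) (B.q ≫ B.zeroq ≫ D.zero.app E) pfB.symm
          ≫ D.T.map B.addq := B.Timg_comm _ _ pfB
    _ = B.TE2.pair (D.zero.app E) (D.zero.app E ≫ D.T.map B.q ≫ D.T.map B.zeroq) pfD
          ≫ D.T.map B.addq :=
        congrArg (· ≫ D.T.map B.addq) (B.TE2.pair_congr rfl c3.symm)
    _ = D.zero.app E := B.Timg_zero _ pfD

end DiffBundle

end BLevel
section Wrappers

variable {C : Type u} [Category.{v} C] (D : TangentCat C)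

theorem TangentCat.add_nat' {A A' : C} (f : A ⟶ A') {X : C} (u v : X ⟶ D.T.obj A)
    (h : u ≫ D.p.app A = v ≫ D.p.app A) :
    (D.T2 A).pair u v h ≫ D.add A ≫ D.T.map f
      = (D.T2 A').pair (u ≫ D.T.map f) (v ≫ D.T.map f)
        (by rw [Category.assoc, D.p_nat f, Category.assoc, D.p_nat f, ← Category.assoc, h,
          Category.assoc]) ≫ D.add A' :=
  D.add_nat f u v h _

theorem TangentCat.Timg_c' {A X : C} (x y : X ⟶ D.T.obj (D.T.obj A))
    (hx : x ≫ D.T.map (D.p.app A) = y ≫ D.T.map (D.p.app A)) :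
    (D.T2T A).pair x y hx ≫ D.T.map (D.add A) ≫ D.c.app A
      = (D.T2 (D.T.obj A)).pair (x ≫ D.c.app A) (y ≫ D.c.app A)
        (by rw [Category.assoc, D.c_p, Category.assoc, D.c_p]; exact hx)
        ≫ D.add (D.T.obj A) :=
  D.Timg_c x y hx _

theorem TangentCat.padd_c' {A X : C} (a b : X ⟶ D.T.obj (D.T.obj A))
    (h : a ≫ D.p.app (D.T.obj A) = b ≫ D.p.app (D.T.obj A)) :
    ((D.T2 (D.T.obj A)).pair a b h ≫ D.add (D.T.obj A)) ≫ D.c.app A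
      = (D.T2T A).pair (a ≫ D.c.app A) (b ≫ D.c.app A)
        (by rw [Category.assoc, D.c_Tp, Category.assoc, D.c_Tp]; exact h)
        ≫ D.T.map (D.add A) :=
  D.padd_c a b h _

end Wrappers

section BLevel2

variable {C : Type u} [Category.{v} C] {D : TangentCat C} {E M : C} (B : DiffBundle D E M)

theorem DiffBundle.lam_add2' {X : C} (f g : X ⟶ E) (h : f ≫ B.q = g ≫ B.q) :
    B.E2.pair f g h ≫ B.addq ≫ B.lam
      = (D.T2 E).pair (f ≫ B.lam) (g ≫ B.lam) (B.fib_lam_p f g h) ≫ D.add E :=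
  B.lam_add2 f g h _

end BLevel2
section KLevel

variable {C : Type u} [Category.{v} C] {D : TangentCat C} {E M : C} (B : DiffBundle D E M)
  (K : D.T.obj E ⟶ E)

namespace DiffBundle

theorem fib_K (hK : IsVerticalConnection D B.q B.lam K) {X : C} (u v : X ⟶ D.T.obj E)
    (h : u ≫ D.T.map B.q = v ≫ D.T.map B.q) :
    (u ≫ K) ≫ B.q = (v ≫ K) ≫ B.q := by
  have h2 := congrArg (· ≫ D.p.app M) h
  simp only [Category.assoc] at h2
  rw [D.p_nat B.q] at h2
  simp only [Category.assoc]
  rw [hK.2.1]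
  exact h2

/-- `K` is additive for fibrewise sums over `p`. -/
theorem K_padd (hK : IsVerticalConnection D B.q B.lam K)
    {X : C} (a b : X ⟶ D.T.obj E) (h : a ≫ D.p.app E = b ≫ D.p.app E)
    (hq : (a ≫ K) ≫ B.q = (b ≫ K) ≫ B.q) :
    ((D.T2 E).pair a b h ≫ D.add E) ≫ K = B.E2.pair (a ≫ K) (b ≫ K) hq ≫ B.addq := by
  obtain ⟨hK1, hK2, hK3, hK4⟩ := hK
  apply B.lam_mono (D := D)
  have hl : (a ≫ D.l.app E) ≫ D.T.map (D.p.app E)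
      = (b ≫ D.l.app E) ≫ D.T.map (D.p.app E) := by
    rw [Category.assoc, D.l_Tp, Category.assoc, D.l_Tp, ← Category.assoc, h, Category.assoc]
  have hl2 : (a ≫ D.l.app E) ≫ D.p.app (D.T.obj E)
      = (b ≫ D.l.app E) ≫ D.p.app (D.T.obj E) := by
    rw [Category.assoc, D.l_pT, Category.assoc, D.l_pT, ← Category.assoc, h, Category.assoc]
  obtain ⟨w, hw0, hw1, hw⟩ := D.l_add E a b h
  have hww : w = (D.T2T E).pair (a ≫ D.l.app E) (b ≫ D.l.app E) hl :=
    (D.T2T E).hom_ext _ _ (by rw [hw0, (D.T2T E).pair_pr0])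
      (by rw [hw1, (D.T2T E).pair_pr1])
  rw [hww] at hw
  have hWc : ((D.T2T E).pair (a ≫ D.l.app E) (b ≫ D.l.app E) hl ≫ D.T.map (D.add E))
      ≫ D.c.app E
      = (D.T2T E).pair (a ≫ D.l.app E) (b ≫ D.l.app E) hl ≫ D.T.map (D.add E) := by
    rw [← hw, Category.assoc, Category.assoc, D.l_c]
  have hW' : (D.T2T E).pair (a ≫ D.l.app E) (b ≫ D.l.app E) hl ≫ D.T.map (D.add E)
      = (D.T2 (D.T.obj E)).pair (a ≫ D.l.app E) (b ≫ D.l.app E) hl2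
        ≫ D.add (D.T.obj E) := by
    have h32 := D.Timg_c' (a ≫ D.l.app E) (b ≫ D.l.app E) hl
    rw [← Category.assoc] at h32
    rw [← hWc, h32]
    exact congrArg (· ≫ D.add (D.T.obj E)) ((D.T2 (D.T.obj E)).pair_congr
      (by rw [Category.assoc, D.l_c]) (by rw [Category.assoc, D.l_c]))
  simp only [Category.assoc]
  rw [hK3, reassoc_of% hw, reassoc_of% hW', D.add_nat' K _ _ hl2,
    B.lam_add2' (a ≫ K) (b ≫ K) hq]
  exact congrArg (· ≫ D.add E) ((D.T2 E).pair_congr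
    (by rw [Category.assoc, ← hK3, ← Category.assoc])
    (by rw [Category.assoc, ← hK3, ← Category.assoc]))

/-- `K` sends the zero of `p` to the zero of `q`. -/
theorem zero_K (hK : IsVerticalConnection D B.q B.lam K) :
    D.zero.app E ≫ K = B.q ≫ B.zeroq := by
  obtain ⟨hK1, hK2, hK3, hK4⟩ := hK
  have h1 : (D.zero.app E ≫ K) ≫ B.lam = D.zero.app E ≫ D.T.map (D.zero.app E ≫ K) := by
    rw [Category.assoc, hK3, ← Category.assoc, D.l_zero, D.T.map_comp, Category.assoc]
  have h2 : (D.zero.app E ≫ K) ≫ B.lam = B.lam ≫ D.T.map (D.zero.app E ≫ K) := by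
    rw [Category.assoc, hK4, ← Category.assoc, ← D.zero_nat B.lam, Category.assoc,
      ← Category.assoc (D.zero.app (D.T.obj E)), D.zero_c, D.T.map_comp,
      ← Category.assoc, Category.assoc]
  have h3 : D.zero.app E ≫ D.T.map (D.zero.app E ≫ K)
      = (D.zero.app E ≫ K) ≫ D.zero.app E :=
    (D.zero_nat (D.zero.app E ≫ K)).symm
  have h4 : B.lam ≫ D.T.map (D.zero.app E ≫ K) = (D.zero.app E ≫ K) ≫ D.zero.app E := by
    rw [← h2, h1, h3]
  have h5 : B.lam ≫ D.T.map (D.zero.app E ≫ K) ≫ D.p.app E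
      = ((D.zero.app E ≫ K) ≫ D.zero.app E) ≫ D.p.app E := by
    rw [← Category.assoc, h4]
  rw [D.p_nat (D.zero.app E ≫ K)] at h5
  rw [Category.assoc, D.zero_p, Category.comp_id] at h5
  simp only [Functor.id_obj] at h5
  rw [← Category.assoc, B.lam_p, Category.assoc] at h5
  -- h5 : B.q ≫ B.zeroq ≫ D.zero.app E ≫ K = D.zero.app E ≫ K
  have h6 : B.zeroq ≫ D.zero.app E ≫ K = B.zeroq := by
    rw [← Category.assoc, ← B.lam_zero2, Category.assoc, hK1, Category.comp_id]
  rw [← h5, h6]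

/-- `K` is additive for `T`-image sums over `Tq`. -/
theorem K_Timgadd (hK : IsVerticalConnection D B.q B.lam K)
    {X : C} (u v : X ⟶ D.T.obj E) (h : u ≫ D.T.map B.q = v ≫ D.T.map B.q)
    (hq : (u ≫ K) ≫ B.q = (v ≫ K) ≫ B.q) :
    (B.TE2.pair u v h ≫ D.T.map B.addq) ≫ K
      = B.E2.pair (u ≫ K) (v ≫ K) hq ≫ B.addq := by
  obtain ⟨hK1, hK2, hK3, hK4⟩ := hK
  apply B.lam_mono (D := D)
  have hTT : (u ≫ D.T.map B.lam) ≫ D.T.map (D.p.app E)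
      = (v ≫ D.T.map B.lam) ≫ D.T.map (D.p.app E) := by
    rw [Category.assoc, ← D.T.map_comp, B.lam_p, Category.assoc, ← D.T.map_comp, B.lam_p,
      D.T.map_comp, ← Category.assoc, ← Category.assoc, h]
  have eA : B.TE2.pair u v h
      ≫ D.T.map ((D.T2 E).pair (B.E2.pr0 ≫ B.lam) (B.E2.pr1 ≫ B.lam)
        (B.fib_lam_p _ _ B.E2.comm))
      = (D.T2T E).pair (u ≫ D.T.map B.lam) (v ≫ D.T.map B.lam) hTT := by
    rw [(D.T2T E).map_pair]
    exact (D.T2T E).pair_congr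
      (by rw [D.T.map_comp, ← Category.assoc, B.TE2.pair_pr0])
      (by rw [D.T.map_comp, ← Category.assoc, B.TE2.pair_pr1])
  simp only [Category.assoc]
  rw [B.lam_add2' (u ≫ K) (v ≫ K) hq]
  rw [hK4, ← Functor.map_comp_assoc, B.addq_lam (B.fib_lam_p _ _ B.E2.comm),
    Functor.map_comp_assoc, reassoc_of% eA, reassoc_of% (D.Timg_c' _ _ hTT),
    D.add_nat' K _ _ _]
  exact congrArg (· ≫ D.add E) ((D.T2 E).pair_congr
    (by rw [Category.assoc, Category.assoc, ← hK4, ← Category.assoc])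
    (by rw [Category.assoc, Category.assoc, ← hK4, ← Category.assoc]))

theorem mu_K (hK : IsVerticalConnection D B.q B.lam K) : B.mu ≫ K = B.E2.pr0 := by
  rw [B.mu_form, B.K_Timgadd K hK _ _ B.mu_fib (B.fib_K K hK _ _ B.mu_fib)]
  have c1 : (B.E2.pr0 ≫ B.lam) ≫ K = B.E2.pr0 := by
    rw [Category.assoc, hK.1, Category.comp_id]
  have c2 : (B.E2.pr1 ≫ D.zero.app E) ≫ K = B.E2.pr0 ≫ B.q ≫ B.zeroq := by
    rw [Category.assoc, B.zero_K K hK, ← Category.assoc, ← Category.assoc, B.E2.comm,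
      Category.assoc]
  exact (congrArg (· ≫ B.addq) (B.E2.pair_congr c1 c2)).trans
    (B.addq_zero B.E2.pr0 (by simp [B.zeroq_q]))

theorem vert_decomp (hK : IsVerticalConnection D B.q B.lam K) {X : C} (w : X ⟶ D.T.obj E)
    (hvert : w ≫ D.T.map B.q = w ≫ D.p.app E ≫ B.q ≫ D.zero.app M)
    (hq : (w ≫ K) ≫ B.q = (w ≫ D.p.app E) ≫ B.q) :
    B.E2.pair (w ≫ K) (w ≫ D.p.app E) hq ≫ B.mu = w := by
  have h1 := B.muLift_mu w hvert
  have h2 : B.muLift w hvert = B.E2.pair (w ≫ K) (w ≫ D.p.app E) hq :=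
    B.E2.hom_ext _ _
      (by rw [B.E2.pair_pr0, ← B.mu_K K hK, ← Category.assoc, h1])
      (by rw [B.E2.pair_pr1, ← B.mu_p, ← Category.assoc, h1])
  rw [← h2, h1]

end DiffBundle

end KLevel
section VLevel

variable {C : Type u} [Category.{v} C] {D : TangentCat C} {E M : C} (B : DiffBundle D E M)

theorem HasNegatives.one_sub_self' (N : HasNegatives D) (A : C)
    (hpf : 𝟙 (D.T.obj A) ≫ D.p.app A = N.neg A ≫ D.p.app A) :
    (D.T2 A).pair (𝟙 (D.T.obj A)) (N.neg A) hpf ≫ D.add A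
      = D.p.app A ≫ D.zero.app A := by
  have h0 := N.neg_add A (𝟙 (D.T.obj A)) (by simp [N.neg_p])
  calc (D.T2 A).pair (𝟙 (D.T.obj A)) (N.neg A) hpf ≫ D.add A
      = (D.T2 A).pair (𝟙 (D.T.obj A)) (𝟙 (D.T.obj A) ≫ N.neg A) _ ≫ D.add A :=
        congrArg (· ≫ D.add A) ((D.T2 A).pair_congr rfl (Category.id_comp _).symm)
    _ = 𝟙 (D.T.obj A) ≫ D.p.app A ≫ D.zero.app A := h0
    _ = D.p.app A ≫ D.zero.app A := Category.id_comp _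

namespace DiffBundle

theorem fib_p {X : C} (u v : X ⟶ D.T.obj E) (h : u ≫ D.T.map B.q = v ≫ D.T.map B.q) :
    (u ≫ D.p.app E) ≫ B.q = (v ≫ D.p.app E) ≫ B.q := by
  have h2 := congrArg (· ≫ D.p.app M) h
  simp only [Category.assoc] at h2
  rw [D.p_nat B.q] at h2
  simp only [Category.assoc]
  exact h2

theorem Timg_p' {X : C} (u v : X ⟶ D.T.obj E)
    (h : u ≫ D.T.map B.q = v ≫ D.T.map B.q) :
    B.TE2.pair u v h ≫ D.p.app B.E2.P
      = B.E2.pair (u ≫ D.p.app E) (v ≫ D.p.app E) (B.fib_p u v h) :=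
  B.Timg_p u v h _

/-- `μ` is additive in its first argument. -/
theorem mu_add {X : C} (x y e : X ⟶ E)
    (hx : x ≫ B.q = e ≫ B.q) (hy : y ≫ B.q = e ≫ B.q)
    (h1 : x ≫ B.q = y ≫ B.q) (h2 : (B.E2.pair x y h1 ≫ B.addq) ≫ B.q = e ≫ B.q)
    (h3 : (B.E2.pair x e hx ≫ B.mu) ≫ D.p.app E
      = (B.E2.pair y e hy ≫ B.mu) ≫ D.p.app E) :
    B.E2.pair (B.E2.pair x y h1 ≫ B.addq) e h2 ≫ B.mu
      = (D.T2 E).pair (B.E2.pair x e hx ≫ B.mu) (B.E2.pair y e hy ≫ B.mu) h3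
        ≫ D.add E := by
  have ezero : (D.T2 E).pair (e ≫ D.zero.app E) (e ≫ D.zero.app E)
      rfl ≫ D.add E = e ≫ D.zero.app E := by
    refine (congrArg (· ≫ D.add E) ((D.T2 E).pair_congr rfl ?_)).trans
      (D.add_zero' E (e ≫ D.zero.app E) (by simp [D.zero_p, reassoc_of% (D.zero_p E)]))
    simp [D.zero_p, reassoc_of% (D.zero_p E)]
  have pfI : ((D.T2 E).pair (x ≫ B.lam) (y ≫ B.lam) (B.fib_lam_p x y h1) ≫ D.add E)
      ≫ D.T.map B.q = (e ≫ D.zero.app E) ≫ D.T.map B.q := by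
    rw [Category.assoc, D.add_nat' B.q]
    have e1 : (x ≫ B.lam) ≫ D.T.map B.q = (e ≫ B.q) ≫ D.zero.app M := by
      rw [Category.assoc, B.lam_Tq, ← Category.assoc, hx]
    have e2 : (y ≫ B.lam) ≫ D.T.map B.q = (e ≫ B.q) ≫ D.zero.app M := by
      rw [Category.assoc, B.lam_Tq, ← Category.assoc, hy]
    have ezM : (D.T2 M).pair ((e ≫ B.q) ≫ D.zero.app M) ((e ≫ B.q) ≫ D.zero.app M)
        rfl ≫ D.add M = (e ≫ B.q) ≫ D.zero.app M := by
      refine (congrArg (· ≫ D.add M) ((D.T2 M).pair_congr rfl ?_)).trans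
        (D.add_zero' M ((e ≫ B.q) ≫ D.zero.app M)
          (by simp [D.zero_p, reassoc_of% (D.zero_p M)]))
      simp [D.zero_p, reassoc_of% (D.zero_p M)]
    refine (congrArg (· ≫ D.add M) ((D.T2 M).pair_congr e1 e2)).trans (ezM.trans ?_)
    rw [Category.assoc, D.zero_nat B.q, ← Category.assoc]
  have hW : B.TE2.pair (x ≫ B.lam) (e ≫ D.zero.app E) (B.fib_lam_zero x e hx)
        ≫ D.p.app B.E2.P
      = B.TE2.pair (y ≫ B.lam) (e ≫ D.zero.app E) (B.fib_lam_zero y e hy)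
        ≫ D.p.app B.E2.P := by
    rw [B.Timg_p', B.Timg_p']
    exact B.E2.pair_congr (B.fib_lam_p x y h1) rfl
  have inner : (D.T2 B.E2.P).pair
        (B.TE2.pair (x ≫ B.lam) (e ≫ D.zero.app E) (B.fib_lam_zero x e hx))
        (B.TE2.pair (y ≫ B.lam) (e ≫ D.zero.app E) (B.fib_lam_zero y e hy)) hW
        ≫ D.add B.E2.P
      = B.TE2.pair
          ((D.T2 E).pair (x ≫ B.lam) (y ≫ B.lam) (B.fib_lam_p x y h1) ≫ D.add E)
          (e ≫ D.zero.app E) pfI := by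
    apply B.TE2.hom_ext
    · rw [Category.assoc, D.add_nat' B.E2.pr0]
      conv_rhs => rw [B.TE2.pair_pr0]
      exact congrArg (· ≫ D.add E) ((D.T2 E).pair_congr (B.TE2.pair_pr0 _ _ _)
        (B.TE2.pair_pr0 _ _ _))
    · rw [Category.assoc, D.add_nat' B.E2.pr1]
      conv_rhs => rw [B.TE2.pair_pr1]
      exact (congrArg (· ≫ D.add E) ((D.T2 E).pair_congr (B.TE2.pair_pr1 _ _ _)
        (B.TE2.pair_pr1 _ _ _))).trans ezero
  have comp1 : (B.E2.pair x y h1 ≫ B.addq) ≫ B.lam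
      = (D.T2 E).pair (x ≫ B.lam) (y ≫ B.lam) (B.fib_lam_p x y h1) ≫ D.add E := by
    rw [Category.assoc, B.lam_add2']
  have stepL : B.E2.pair (B.E2.pair x y h1 ≫ B.addq) e h2 ≫ B.mu
      = B.TE2.pair ((D.T2 E).pair (x ≫ B.lam) (y ≫ B.lam) (B.fib_lam_p x y h1) ≫ D.add E)
          (e ≫ D.zero.app E) pfI ≫ D.T.map B.addq := by
    rw [B.pair_mu _ e h2 (B.fib_lam_zero _ e h2)]
    exact congrArg (· ≫ D.T.map B.addq) (B.TE2.pair_congr comp1 rfl)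
  rw [stepL, ← inner, Category.assoc, D.add_nat' B.addq]
  exact congrArg (· ≫ D.add E) ((D.T2 E).pair_congr
    (B.pair_mu x e hx (B.fib_lam_zero x e hx)).symm
    (B.pair_mu y e hy (B.fib_lam_zero y e hy)).symm)

/-- `V := Rμ` commutes with the vertical lift. -/
theorem V_l (K : D.T.obj E ⟶ E) (hK : IsVerticalConnection D B.q B.lam K)
    (R : D.T.obj E ⟶ B.E2.P) (hR0 : R ≫ B.E2.pr0 = K) (hR1 : R ≫ B.E2.pr1 = D.p.app E) :
    (R ≫ B.mu) ≫ D.l.app E = D.l.app E ≫ D.T.map (R ≫ B.mu) := by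
  obtain ⟨hK1, hK2, hK3, hK4⟩ := hK
  have key : R ≫ B.TE2.pair (B.E2.pr0 ≫ B.lam) (B.E2.pr1 ≫ D.zero.app E) B.mu_fib
        ≫ D.l.app B.E2.P
      = D.l.app E ≫ D.T.map R
        ≫ D.T.map (B.TE2.pair (B.E2.pr0 ≫ B.lam) (B.E2.pr1 ≫ D.zero.app E) B.mu_fib) := by
    have inKl : R ≫ B.TE2.pair (B.E2.pr0 ≫ B.lam) (B.E2.pr1 ≫ D.zero.app E) B.mu_fib
        ≫ D.T.map B.E2.pr0 = K ≫ B.lam := by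
      rw [B.TE2.pair_pr0, ← Category.assoc, hR0]
    have inp0 : R ≫ B.TE2.pair (B.E2.pr0 ≫ B.lam) (B.E2.pr1 ≫ D.zero.app E) B.mu_fib
        ≫ D.T.map B.E2.pr1 = D.p.app E ≫ D.zero.app E := by
      rw [B.TE2.pair_pr1, ← Category.assoc, hR1]
    apply B.TT_hom_ext
    · simp only [Category.assoc]
      rw [← D.l_nat B.E2.pr0, reassoc_of% (B.TE2.pair_pr0 _ _ B.mu_fib),
        reassoc_of% hR0, B.lam_l]
      simp only [Category.assoc, ← Functor.map_comp]
      rw [inKl, D.T.map_comp, ← reassoc_of% hK3]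
    · simp only [Category.assoc]
      rw [← D.l_nat B.E2.pr1, reassoc_of% (B.TE2.pair_pr1 _ _ B.mu_fib),
        reassoc_of% hR1, D.l_zero]
      simp only [Category.assoc, ← Functor.map_comp]
      rw [inp0, D.T.map_comp, reassoc_of% (D.l_Tp E)]
  rw [B.mu_form]
  simp only [Category.assoc, Functor.map_comp]
  rw [D.l_nat B.addq, reassoc_of% key]

/-- `V := Rμ` commutes with `T(λ)c`. -/
theorem V_Tlam_c (K : D.T.obj E ⟶ E) (hK : IsVerticalConnection D B.q B.lam K)
    (R : D.T.obj E ⟶ B.E2.P) (hR0 : R ≫ B.E2.pr0 = K) (hR1 : R ≫ B.E2.pr1 = D.p.app E) :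
    (R ≫ B.mu) ≫ D.T.map B.lam ≫ D.c.app E
      = D.T.map B.lam ≫ D.c.app E ≫ D.T.map (R ≫ B.mu) := by
  obtain ⟨hK1, hK2, hK3, hK4⟩ := hK
  have key : R ≫ B.TE2.pair (B.E2.pr0 ≫ B.lam) (B.E2.pr1 ≫ D.zero.app E) B.mu_fib
        ≫ D.T.map (B.TE2.pair (B.E2.pr0 ≫ B.lam) (B.E2.pr1 ≫ B.lam)
          (B.fib_lam_Tq _ _ B.E2.comm)) ≫ D.c.app B.E2.P
      = D.T.map B.lam ≫ D.c.app E ≫ D.T.map R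
        ≫ D.T.map (B.TE2.pair (B.E2.pr0 ≫ B.lam) (B.E2.pr1 ≫ D.zero.app E) B.mu_fib) := by
    have inKl : R ≫ B.TE2.pair (B.E2.pr0 ≫ B.lam) (B.E2.pr1 ≫ D.zero.app E) B.mu_fib
        ≫ D.T.map B.E2.pr0 = K ≫ B.lam := by
      rw [B.TE2.pair_pr0, ← Category.assoc, hR0]
    have inp0 : R ≫ B.TE2.pair (B.E2.pr0 ≫ B.lam) (B.E2.pr1 ≫ D.zero.app E) B.mu_fib
        ≫ D.T.map B.E2.pr1 = D.p.app E ≫ D.zero.app E := by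
      rw [B.TE2.pair_pr1, ← Category.assoc, hR1]
    apply B.TT_hom_ext
    · simp only [Category.assoc]
      rw [← D.c_nat B.E2.pr0, ← Functor.map_comp_assoc,
        B.TE2.pair_pr0 _ _ (B.fib_lam_Tq _ _ B.E2.comm), Functor.map_comp_assoc,
        reassoc_of% (B.TE2.pair_pr0 _ _ B.mu_fib), reassoc_of% hR0,
        ← reassoc_of% B.lam_l, D.l_c, B.lam_l]
      simp only [Category.assoc, ← Functor.map_comp]
      rw [inKl, D.T.map_comp, ← reassoc_of% hK4]
    · simp only [Category.assoc]
      rw [← D.c_nat B.E2.pr1, ← Functor.map_comp_assoc,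
        B.TE2.pair_pr1 _ _ (B.fib_lam_Tq _ _ B.E2.comm), Functor.map_comp_assoc,
        reassoc_of% (B.TE2.pair_pr1 _ _ B.mu_fib), reassoc_of% hR1,
        ← reassoc_of% (D.zero_nat B.lam), D.zero_c]
      simp only [Category.assoc, ← Functor.map_comp]
      rw [inp0, D.T.map_comp, reassoc_of% (D.c_Tp E), reassoc_of% (D.p_nat B.lam)]
  rw [B.mu_form]
  simp only [Category.assoc, Functor.map_comp]
  rw [← Functor.map_comp_assoc, B.addq_lam1 (B.fib_lam_Tq _ _ B.E2.comm),
    Functor.map_comp_assoc, D.c_nat B.addq, reassoc_of% key]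

/-- negation commutes with `T(λ)c`. -/
theorem neg_Tlam_c (N : HasNegatives D) :
    N.neg E ≫ D.T.map B.lam ≫ D.c.app E
      = D.T.map B.lam ≫ D.c.app E ≫ D.T.map (N.neg E) := by
  have hpf : 𝟙 (D.T.obj E) ≫ D.p.app E = N.neg E ≫ D.p.app E := by
    rw [Category.id_comp, N.neg_p]
  have hval := HasNegatives.one_sub_self' N E hpf
  have fib1 : ((𝟙 (D.T.obj E) ≫ D.T.map B.lam) ≫ D.c.app E) ≫ D.T.map (D.p.app E)
      = ((N.neg E ≫ D.T.map B.lam) ≫ D.c.app E) ≫ D.T.map (D.p.app E) := by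
    simp only [Category.assoc, Category.id_comp, D.c_Tp, reassoc_of% (D.c_Tp E),
      D.p_nat B.lam, reassoc_of% (D.p_nat B.lam), N.neg_p, reassoc_of% (N.neg_p E)]
  have fib2 : ((𝟙 (D.T.obj E) ≫ D.T.map B.lam) ≫ D.c.app E) ≫ D.T.map (D.p.app E)
      = ((D.T.map B.lam ≫ D.c.app E) ≫ D.T.map (N.neg E)) ≫ D.T.map (D.p.app E) := by
    simp only [Category.assoc, Category.id_comp, ← Functor.map_comp, N.neg_p]
  have s1 : (D.T2T E).pair ((𝟙 (D.T.obj E) ≫ D.T.map B.lam) ≫ D.c.app E)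
        ((N.neg E ≫ D.T.map B.lam) ≫ D.c.app E) fib1 ≫ D.T.map (D.add E)
      = D.p.app E ≫ B.lam ≫ D.T.map (D.zero.app E) := by
    rw [← D.padd_c' (𝟙 (D.T.obj E) ≫ D.T.map B.lam) (N.neg E ≫ D.T.map B.lam)
      (by simp only [Category.assoc, Category.id_comp, D.p_nat B.lam,
        reassoc_of% (D.p_nat B.lam), N.neg_p, reassoc_of% (N.neg_p E)])]
    rw [← D.add_nat' B.lam (𝟙 (D.T.obj E)) (N.neg E) hpf, reassoc_of% hval]
    simp only [Category.assoc]
    rw [← reassoc_of% (D.zero_nat B.lam), D.zero_c]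
  have s2 : (D.T2T E).pair ((𝟙 (D.T.obj E) ≫ D.T.map B.lam) ≫ D.c.app E)
        ((D.T.map B.lam ≫ D.c.app E) ≫ D.T.map (N.neg E)) fib2 ≫ D.T.map (D.add E)
      = D.p.app E ≫ B.lam ≫ D.T.map (D.zero.app E) := by
    have e1 : (D.T.map B.lam ≫ D.c.app E)
        ≫ D.T.map ((D.T2 E).pair (𝟙 (D.T.obj E)) (N.neg E) hpf)
        = (D.T2T E).pair ((𝟙 (D.T.obj E) ≫ D.T.map B.lam) ≫ D.c.app E)
          ((D.T.map B.lam ≫ D.c.app E) ≫ D.T.map (N.neg E)) fib2 := by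
      rw [(D.T2T E).map_pair]
      exact (D.T2T E).pair_congr
        (by rw [D.T.map_id, Category.comp_id, Category.id_comp]) rfl
    rw [← e1]
    simp only [Category.assoc]
    rw [← D.T.map_comp, hval, D.T.map_comp, reassoc_of% (D.c_Tp E),
      reassoc_of% (D.p_nat B.lam)]
  have hcancel := D.Tcancel N fib1 fib2 (s1.trans s2.symm)
  rw [← Category.assoc, hcancel, Category.assoc]

end DiffBundle

end VLevel

end AuxStmt17


/-- In a tangent category with negatives, if `K` is a
vertical connection on a differential bundle `𝗊` which has some horizontal
connection `J`, then `J(1 − ⟨K,p⟩μ)` is a horizontal connection on `𝗊` and the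
pair `(K, J(1 − ⟨K,p⟩μ))` is a connection on `𝗊`.  Here `R = ⟨K,p⟩`. -/
theorem stmt17 (D : TangentCat C) (N : HasNegatives D) {E M : C}
    (B : DiffBundle D E M) (K : D.T.obj E ⟶ E)
    (hK : IsVerticalConnection D B.q B.lam K)
    (J : B.P.P ⟶ D.T.obj E) (hJ : IsHorizontalConnection D B.q B.lam B.P J)
    (R : D.T.obj E ⟶ B.E2.P) (hR0 : R ≫ B.E2.pr0 = K)
    (hR1 : R ≫ B.E2.pr1 = D.p.app E) :
    IsHorizontalConnection D B.q B.lam B.P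
        (J ≫ D.sub N (𝟙 (D.T.obj E)) (R ≫ B.mu)) ∧
    IsConnection B K (J ≫ D.sub N (𝟙 (D.T.obj E)) (R ≫ B.mu)) := by
  obtain ⟨hJ1, hJ2, hJ3, hJ4⟩ := hJ
  have hUpr0 : D.hdesc B.q B.P ≫ B.P.pr0 = D.T.map B.q := B.P.pair_pr0 _ _ _
  have hUpr1 : D.hdesc B.q B.P ≫ B.P.pr1 = D.p.app E := B.P.pair_pr1 _ _ _
  let one : FibN D N (D.T.obj E) E (D.p.app E) := ⟨𝟙 (D.T.obj E), Category.id_comp _⟩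
  let vV : FibN D N (D.T.obj E) E (D.p.app E) :=
    ⟨R ≫ B.mu, by rw [Category.assoc, B.mu_p, hR1]⟩
  let uj : FibN D N (D.T.obj E) E (D.p.app E) :=
    ⟨D.hdesc B.q B.P ≫ J, by rw [Category.assoc, hJ2, hUpr1]⟩
  let ujv : FibN D N (D.T.obj E) E (D.p.app E) :=
    ⟨uj.f ≫ R ≫ B.mu, by
      simp only [uj, Category.assoc]
      rw [B.mu_p, hR1, hJ2, hUpr1]⟩
  have hS : D.sub N (𝟙 (D.T.obj E)) (R ≫ B.mu) = (one - vV).f := FibN.hsub_f one vV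
  have hVq : (R ≫ B.mu) ≫ D.T.map B.q = (D.p.app E ≫ B.q) ≫ D.zero.app M := by
    rw [Category.assoc, B.mu_Tq, reassoc_of% hR0, reassoc_of% hK.2.1, ← Category.assoc]
  have hpushV : FibN.pushHom (N := N) B.q vV = 0 := FibN.ext' hVq
  have hpushS : (one - vV).f ≫ D.T.map B.q = D.T.map B.q := by
    have h2 : FibN.pushHom (N := N) B.q (one - vV) = FibN.pushHom (N := N) B.q one := by
      rw [map_sub, hpushV, sub_zero]
    exact (congrArg FibN.f h2).trans (Category.id_comp _)
  have hG1 : (J ≫ D.sub N (𝟙 (D.T.obj E)) (R ≫ B.mu)) ≫ D.T.map B.q = B.P.pr0 := by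
    rw [hS, Category.assoc, hpushS, hJ1]
  have hG2 : (J ≫ D.sub N (𝟙 (D.T.obj E)) (R ≫ B.mu)) ≫ D.p.app E = B.P.pr1 := by
    rw [hS, Category.assoc, (one - vV).hp, hJ2]
  -- S commutes with the vertical lift
  have hVl := B.V_l K hK R hR0 hR1
  have hnegl := HasNegatives.neg_l D N E
  have comp2 : ((R ≫ B.mu) ≫ N.neg E) ≫ D.l.app E
      = D.l.app E ≫ D.T.map ((R ≫ B.mu) ≫ N.neg E) := by
    rw [Category.assoc, hnegl, ← Category.assoc, hVl, Category.assoc, ← D.T.map_comp]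
  have hSl : (one - vV).f ≫ D.l.app E = D.l.app E ≫ D.T.map ((one - vV).f) := by
    rw [FibN.sub_f]
    obtain ⟨w, hw0, hw1, hw⟩ := D.l_add E (𝟙 (D.T.obj E)) ((R ≫ B.mu) ≫ N.neg E)
      (by simp only [Category.id_comp, Category.assoc, N.neg_p, B.mu_p, hR1])
    have hww : w = (D.T2T E).pair (D.l.app E) (((R ≫ B.mu) ≫ N.neg E) ≫ D.l.app E)
        (by simp only [Category.assoc, D.l_Tp, N.neg_p, reassoc_of% (N.neg_p E),
          B.mu_p, reassoc_of% B.mu_p, hR1, reassoc_of% hR1]) :=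
      (D.T2T E).hom_ext _ _
        (by rw [hw0, Category.id_comp, (D.T2T E).pair_pr0])
        (by rw [hw1, (D.T2T E).pair_pr1])
    rw [hww] at hw
    rw [Category.assoc, hw, D.T.map_comp]
    conv_rhs => rw [← Category.assoc]
    rw [(D.T2T E).map_pair]
    exact congrArg (· ≫ D.T.map (D.add E)) ((D.T2T E).pair_congr
      (by rw [D.T.map_id, Category.comp_id]) comp2)
  have hG3 : ∃ w : B.P.P ⟶ D.T.obj B.P.P,
      w ≫ D.T.map B.P.pr0 = B.P.pr0 ≫ D.l.app M ∧
      w ≫ D.T.map B.P.pr1 = B.P.pr1 ≫ D.zero.app E ∧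
      (J ≫ D.sub N (𝟙 (D.T.obj E)) (R ≫ B.mu)) ≫ D.l.app E
        = w ≫ D.T.map (J ≫ D.sub N (𝟙 (D.T.obj E)) (R ≫ B.mu)) := by
    obtain ⟨w3, h30, h31, h32⟩ := hJ3
    refine ⟨w3, h30, h31, ?_⟩
    rw [hS, Category.assoc, hSl, ← Category.assoc, h32, Category.assoc, ← D.T.map_comp]
  -- S commutes with T(lam) c
  have hVc := B.V_Tlam_c K hK R hR0 hR1
  have hnegc := B.neg_Tlam_c N
  have comp3 : R ≫ B.mu ≫ N.neg E ≫ D.T.map B.lam ≫ D.c.app E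
      = D.T.map B.lam ≫ D.c.app E ≫ D.T.map (R ≫ B.mu ≫ N.neg E) := by
    rw [hnegc, reassoc_of% hVc, ← D.T.map_comp]
    simp only [Category.assoc]
  have hSc : (one - vV).f ≫ D.T.map B.lam ≫ D.c.app E
      = D.T.map B.lam ≫ D.c.app E ≫ D.T.map ((one - vV).f) := by
    rw [FibN.sub_f]
    simp only [one, vV, Category.assoc]
    have hpf' : 𝟙 (D.T.obj E) ≫ D.p.app E = (R ≫ B.mu ≫ N.neg E) ≫ D.p.app E := by
      simp only [Category.id_comp, Category.assoc, N.neg_p, B.mu_p, hR1]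
    rw [reassoc_of% (D.add_nat' B.lam (𝟙 (D.T.obj E)) (R ≫ B.mu ≫ N.neg E) hpf')]
    have hpc := D.padd_c' (D.T.map B.lam)
      (R ≫ B.mu ≫ N.neg E ≫ D.T.map B.lam)
      (by simp only [Category.id_comp, Category.assoc, D.p_nat B.lam, N.neg_p,
        reassoc_of% (N.neg_p E), B.mu_p, reassoc_of% B.mu_p, hR1, reassoc_of% hR1])
    simp only [Category.assoc] at hpc
    rw [hpc, D.T.map_comp]
    conv_rhs => rw [← Category.assoc]
    conv_rhs => rw [← Category.assoc]
    rw [(D.T2T E).map_pair]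
    exact congrArg (· ≫ D.T.map (D.add E)) ((D.T2T E).pair_congr (by simp)
      (by rw [comp3, ← Category.assoc]))
  have hG4 : ∃ w : B.P.P ⟶ D.T.obj B.P.P,
      w ≫ D.T.map B.P.pr0 = B.P.pr0 ≫ D.zero.app (D.T.obj M) ∧
      w ≫ D.T.map B.P.pr1 = B.P.pr1 ≫ B.lam ∧
      (J ≫ D.sub N (𝟙 (D.T.obj E)) (R ≫ B.mu)) ≫ D.T.map B.lam ≫ D.c.app E
        = w ≫ D.T.map (J ≫ D.sub N (𝟙 (D.T.obj E)) (R ≫ B.mu)) := by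
    obtain ⟨w4, h40, h41, h42⟩ := hJ4
    refine ⟨w4, h40, h41, ?_⟩
    rw [hS, Category.assoc, hSc, reassoc_of% h42, ← D.T.map_comp]
  have hHor : IsHorizontalConnection D B.q B.lam B.P
      (J ≫ D.sub N (𝟙 (D.T.obj E)) (R ≫ B.mu)) := ⟨hG1, hG2, hG3, hG4⟩
  -- vertical algebra
  have hRpair : R = B.E2.pair K (D.p.app E) hK.2.1 :=
    B.E2.hom_ext _ _ (by rw [hR0, B.E2.pair_pr0]) (by rw [hR1, B.E2.pair_pr1])
  have hmuR : B.mu ≫ R = 𝟙 B.E2.P := by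
    conv_lhs => rw [hRpair, B.E2.comp_pair]
    exact (B.E2.pair_congr (B.mu_K K hK) B.mu_p).trans B.E2.pair_id
  have hVV : (R ≫ B.mu) ≫ R ≫ B.mu = R ≫ B.mu := by
    rw [Category.assoc, ← Category.assoc B.mu R B.mu, hmuR, Category.id_comp]
  have hphiP : ∀ a : FibN D N (D.T.obj E) E (D.p.app E),
      (a.f ≫ R ≫ B.mu) ≫ D.p.app E = D.p.app E := by
    intro a
    simp only [Category.assoc]
    rw [B.mu_p, hR1, a.hp]
  have pfa : ∀ a : FibN D N (D.T.obj E) E (D.p.app E),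
      (a.f ≫ K) ≫ B.q = D.p.app E ≫ B.q := by
    intro a
    rw [Category.assoc, hK.2.1, ← Category.assoc, a.hp]
  have eRmu : ∀ a : FibN D N (D.T.obj E) E (D.p.app E),
      a.f ≫ R ≫ B.mu = B.E2.pair (a.f ≫ K) (D.p.app E) (pfa a) ≫ B.mu := by
    intro a
    conv_lhs => rw [← Category.assoc, hRpair, B.E2.comp_pair]
    exact congrArg (· ≫ B.mu) (B.E2.pair_congr rfl a.hp)
  have hphiAdd : ∀ a b : FibN D N (D.T.obj E) E (D.p.app E),
      (a + b).f ≫ R ≫ B.mu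
        = (D.T2 E).pair (a.f ≫ R ≫ B.mu) (b.f ≫ R ≫ B.mu)
            (by rw [hphiP a, hphiP b]) ≫ D.add E := by
    intro a b
    have pfK2 : (a.f ≫ K) ≫ B.q = (b.f ≫ K) ≫ B.q := (pfa a).trans (pfa b).symm
    have eK : (a + b).f ≫ K = B.E2.pair (a.f ≫ K) (b.f ≫ K) pfK2 ≫ B.addq := by
      rw [FibN.add_f]
      exact B.K_padd K hK a.f b.f (by rw [a.hp, b.hp]) pfK2
    have h2' : (B.E2.pair (a.f ≫ K) (b.f ≫ K) pfK2 ≫ B.addq) ≫ B.q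
        = D.p.app E ≫ B.q := by
      rw [Category.assoc, B.addq_q, ← Category.assoc, B.E2.pair_pr0]
      exact pfa a
    have h3' : (B.E2.pair (a.f ≫ K) (D.p.app E) (pfa a) ≫ B.mu) ≫ D.p.app E
        = (B.E2.pair (b.f ≫ K) (D.p.app E) (pfa b) ≫ B.mu) ≫ D.p.app E := by
      rw [Category.assoc, B.mu_p, Category.assoc, B.mu_p, B.E2.pair_pr1, B.E2.pair_pr1]
    calc (a + b).f ≫ R ≫ B.mu
        = B.E2.pair ((a + b).f ≫ K) (D.p.app E) (pfa (a + b)) ≫ B.mu := eRmu (a + b)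
      _ = B.E2.pair (B.E2.pair (a.f ≫ K) (b.f ≫ K) pfK2 ≫ B.addq) (D.p.app E) h2'
            ≫ B.mu := congrArg (· ≫ B.mu) (B.E2.pair_congr eK rfl)
      _ = (D.T2 E).pair (B.E2.pair (a.f ≫ K) (D.p.app E) (pfa a) ≫ B.mu)
            (B.E2.pair (b.f ≫ K) (D.p.app E) (pfa b) ≫ B.mu) h3' ≫ D.add E :=
          B.mu_add (a.f ≫ K) (b.f ≫ K) (D.p.app E) (pfa a) (pfa b) pfK2 h2' h3'
      _ = (D.T2 E).pair (a.f ≫ R ≫ B.mu) (b.f ≫ R ≫ B.mu)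
            (by rw [hphiP a, hphiP b]) ≫ D.add E :=
          congrArg (· ≫ D.add E) ((D.T2 E).pair_congr (eRmu a).symm (eRmu b).symm)
  let phi : FibN D N (D.T.obj E) E (D.p.app E) →+ FibN D N (D.T.obj E) E (D.p.app E) :=
    AddMonoidHom.mk' (fun a => ⟨a.f ≫ R ≫ B.mu, hphiP a⟩)
      (fun a b => FibN.ext' (by
        show (a + b).f ≫ R ≫ B.mu = _
        rw [hphiAdd a b]
        rfl))
  have hSV : (one - vV).f ≫ R ≫ B.mu = D.p.app E ≫ D.zero.app E := by
    have hone : phi one = vV := FibN.ext' (Category.id_comp _)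
    have hv2 : phi vV = vV := FibN.ext' hVV
    have h1 : phi (one - vV) = 0 := by rw [map_sub, hone, hv2, sub_self]
    exact congrArg FibN.f h1
  have hp0mu : D.p.app E ≫ D.zero.app E
      = B.E2.pair (D.p.app E ≫ B.q ≫ B.zeroq) (D.p.app E)
        (by simp only [Category.assoc]; rw [B.zeroq_q, Category.comp_id]) ≫ B.mu := by
    have pfz : (B.q ≫ B.zeroq) ≫ B.q = 𝟙 E ≫ B.q := by
      rw [Category.assoc, B.zeroq_q, Category.comp_id, Category.id_comp]
    conv_lhs => rw [← B.zeroE_mu pfz, ← Category.assoc, B.E2.comp_pair]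
    exact congrArg (· ≫ B.mu) (B.E2.pair_congr rfl (Category.comp_id _))
  have hSK : (one - vV).f ≫ K = D.p.app E ≫ B.q ≫ B.zeroq := by
    have heq2 : B.E2.pair ((one - vV).f ≫ K) (D.p.app E) (pfa (one - vV))
        = B.E2.pair (D.p.app E ≫ B.q ≫ B.zeroq) (D.p.app E)
          (by simp only [Category.assoc]; rw [B.zeroq_q, Category.comp_id]) :=
      B.mu_mono _ _ (by rw [← eRmu (one - vV), hSV, hp0mu])
    have h5 := congrArg (· ≫ B.E2.pr0) heq2
    simpa [B.E2.pair_pr0] using h5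
  have hHK : (J ≫ D.sub N (𝟙 (D.T.obj E)) (R ≫ B.mu)) ≫ K
      = B.P.pr1 ≫ B.q ≫ B.zeroq := by
    rw [hS, Category.assoc, hSK, ← Category.assoc, hJ2]
  -- the decomposition identity
  have hujTq : uj.f ≫ D.T.map B.q = 𝟙 (D.T.obj E) ≫ D.T.map B.q := by
    show (D.hdesc B.q B.P ≫ J) ≫ D.T.map B.q = _
    rw [Category.assoc, hJ1, hUpr0, Category.id_comp]
  have hpushd : FibN.pushHom (N := N) B.q (one - uj) = 0 := by
    have h1 : FibN.pushHom (N := N) B.q uj = FibN.pushHom (N := N) B.q one :=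
      FibN.ext' hujTq
    rw [map_sub, h1, sub_self]
  have hdTq : (one - uj).f ≫ D.T.map B.q
      = (one - uj).f ≫ D.p.app E ≫ B.q ≫ D.zero.app M := by
    have h2 : (one - uj).f ≫ D.T.map B.q = (D.p.app E ≫ B.q) ≫ D.zero.app M :=
      congrArg FibN.f hpushd
    have h3 : (one - uj).f ≫ D.p.app E ≫ B.q ≫ D.zero.app M
        = (D.p.app E ≫ B.q) ≫ D.zero.app M := by
      rw [← Category.assoc, ← Category.assoc, (one - uj).hp]
    rw [h2, h3]
  have pfdK : ((one - uj).f ≫ K) ≫ B.q = ((one - uj).f ≫ D.p.app E) ≫ B.q := by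
    rw [Category.assoc, hK.2.1, Category.assoc]
  have hdK := B.vert_decomp K hK (one - uj).f hdTq pfdK
  have hdKp : B.E2.pair ((one - uj).f ≫ K) (D.p.app E) (pfa (one - uj)) ≫ B.mu
      = (one - uj).f :=
    (congrArg (· ≫ B.mu) (B.E2.pair_congr rfl (one - uj).hp.symm)).trans hdK
  have hujv2 : B.E2.pair (uj.f ≫ K) (D.p.app E) (pfa uj) ≫ B.mu = ujv.f :=
    (eRmu uj).symm
  have honesum : (one - uj) + uj = one := by abel
  have pfK2' : ((one - uj).f ≫ K) ≫ B.q = (uj.f ≫ K) ≫ B.q :=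
    (pfa (one - uj)).trans (pfa uj).symm
  have hKsum : B.E2.pair ((one - uj).f ≫ K) (uj.f ≫ K) pfK2' ≫ B.addq = K := by
    have e2 : ((one - uj) + uj).f ≫ K = K := by
      rw [honesum]
      exact Category.id_comp K
    rw [FibN.add_f,
      B.K_padd K hK _ _ (by rw [(one - uj).hp, uj.hp]) pfK2'] at e2
    exact e2
  have hI1 : vV = (one - uj) + ujv := by
    apply FibN.ext'
    have pfsum : (B.E2.pair ((one - uj).f ≫ K) (uj.f ≫ K) pfK2' ≫ B.addq) ≫ B.q
        = D.p.app E ≫ B.q := by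
      rw [Category.assoc, B.addq_q, ← Category.assoc, B.E2.pair_pr0]
      exact pfa (one - uj)
    have pfh3 : (B.E2.pair ((one - uj).f ≫ K) (D.p.app E) (pfa (one - uj)) ≫ B.mu)
          ≫ D.p.app E
        = (B.E2.pair (uj.f ≫ K) (D.p.app E) (pfa uj) ≫ B.mu) ≫ D.p.app E := by
      rw [Category.assoc, B.mu_p, Category.assoc, B.mu_p, B.E2.pair_pr1, B.E2.pair_pr1]
    have pff : (one - uj).f ≫ D.p.app E = ujv.f ≫ D.p.app E := by
      rw [(one - uj).hp, ujv.hp]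
    show R ≫ B.mu = ((one - uj) + ujv).f
    rw [FibN.add_f]
    calc R ≫ B.mu
        = B.E2.pair K (D.p.app E) hK.2.1 ≫ B.mu := by conv_lhs => rw [hRpair]
      _ = B.E2.pair (B.E2.pair ((one - uj).f ≫ K) (uj.f ≫ K) pfK2' ≫ B.addq)
            (D.p.app E) pfsum ≫ B.mu :=
          congrArg (· ≫ B.mu) (B.E2.pair_congr hKsum.symm rfl)
      _ = (D.T2 E).pair
            (B.E2.pair ((one - uj).f ≫ K) (D.p.app E) (pfa (one - uj)) ≫ B.mu)
            (B.E2.pair (uj.f ≫ K) (D.p.app E) (pfa uj) ≫ B.mu) pfh3 ≫ D.add E :=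
          B.mu_add _ _ _ (pfa (one - uj)) (pfa uj) pfK2' pfsum pfh3
      _ = (D.T2 E).pair (one - uj).f ujv.f pff ≫ D.add E :=
          congrArg (· ≫ D.add E) ((D.T2 E).pair_congr hdKp hujv2)
  have hfinal : D.hadd (R ≫ B.mu)
      (D.hdesc B.q B.P ≫ J ≫ D.sub N (𝟙 (D.T.obj E)) (R ≫ B.mu)) = 𝟙 (D.T.obj E) := by
    have hUJS : D.hdesc B.q B.P ≫ J ≫ D.sub N (𝟙 (D.T.obj E)) (R ≫ B.mu)
        = (uj - ujv).f := by
      rw [hS, ← Category.assoc]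
      rw [FibN.sub_f one vV, FibN.sub_f uj ujv, ← Category.assoc, (D.T2 E).comp_pair]
      exact congrArg (· ≫ D.add E) ((D.T2 E).pair_congr (Category.comp_id _)
        (Category.assoc uj.f (R ≫ B.mu) (N.neg E)).symm)
    have hsum : vV + (uj - ujv) = one := by rw [hI1]; abel
    calc D.hadd (R ≫ B.mu) (D.hdesc B.q B.P ≫ J ≫ D.sub N (𝟙 (D.T.obj E)) (R ≫ B.mu))
        = D.hadd (R ≫ B.mu) ((uj - ujv).f) := by rw [hUJS]
      _ = (vV + (uj - ujv)).f := FibN.hadd_f vV (uj - ujv)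
      _ = one.f := congrArg FibN.f hsum
      _ = 𝟙 (D.T.obj E) := rfl
  exact ⟨hHor, ⟨hK, hHor, hHK, ⟨R, hR0, hR1, hfinal⟩⟩⟩
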